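/- arXiv:0804.0986 — 6 statements merged into one kernel-verified Lean document; each statement's English description precedes it below -/
import Mathlib

section
/- Let △abc be a geodesic triangle on the sphere S_r, with side length A = d_r(b,c) opposite the vertex a. Let b′ be the midpoint of the minimal geodesic arc from a to b, and c′ the midpoint of the minimal geodesic arc from a to c. Then the geodesic distance between the midpoints satisfies d_r(b′, c′) > A/2. -/
noncomputable section

/-- Points of ℝ³. -/
abbrev E3 := EuclideanSpace ℝ (Fin 3)

/-- Points of the Euclidean plane. -/
abbrev E2 := EuclideanSpace ℝ (Fin 2)

/-- `p` lies on the sphere `S_r` of radius `r` centered at the origin in ℝ³. -/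
def onSphere (r : ℝ) (p : E3) : Prop := ‖p‖ = r

/-- Geodesic (great-circle) distance on the sphere of radius `r`:
`d_r(p,q) = r · arccos(⟪p,q⟫ / r²)`. -/
def sdist (r : ℝ) (p q : E3) : ℝ := r * Real.arccos ((inner ℝ p q : ℝ) / r ^ 2)

/-- The tangent vector at `p` pointing along the minimal geodesic arc from `p`
towards `q` (the component of `q` orthogonal to `p`). -/
def sTangent (p q : E3) : E3 := q - (((inner ℝ q p : ℝ)) / ‖p‖ ^ 2) • p

/-- The spherical angle at vertex `v` between the minimal geodesic arcs `vp` and `vq`,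
i.e. the angle between the tangent directions of the two arcs at `v`; it lies in `[0, π]`. -/
def sAngle (p v q : E3) : ℝ :=
  InnerProductGeometry.angle (sTangent v p) (sTangent v q)

/-- A geodesic triangle on the sphere of radius `r`: three vertices on the sphere,
pairwise neither equal nor antipodal, and not all lying on one great circle
(equivalently, linearly independent in ℝ³). -/
def SphTriangle (r : ℝ) (a b c : E3) : Prop :=
  onSphere r a ∧ onSphere r b ∧ onSphere r c ∧
  a ≠ b ∧ a ≠ c ∧ b ≠ c ∧ a ≠ -b ∧ a ≠ -c ∧ b ≠ -c ∧
  LinearIndependent ℝ ![a, b, c]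

/-- `m` is the midpoint of the minimal geodesic arc from `p` to `q` on the sphere of
radius `r`: it lies on the sphere and on the arc (distances to the endpoints add up to
the distance between the endpoints) and is equidistant from the two endpoints. -/
def IsSphMidpoint (r : ℝ) (p q m : E3) : Prop :=
  onSphere r m ∧ sdist r p m = sdist r m q ∧ sdist r p m + sdist r m q = sdist r p q

lemma gram_pos (a b c : E3) (h : LinearIndependent ℝ ![a, b, c]) :
    0 < (inner ℝ a a : ℝ) * (inner ℝ b b : ℝ) * (inner ℝ c c : ℝ)
      + 2 * (inner ℝ a b : ℝ) * (inner ℝ a c : ℝ) * (inner ℝ b c : ℝ)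
      - (inner ℝ a a : ℝ) * (inner ℝ b c : ℝ) ^ 2
      - (inner ℝ b b : ℝ) * (inner ℝ a c : ℝ) ^ 2
      - (inner ℝ c c : ℝ) * (inner ℝ a b : ℝ) ^ 2 := by
  set v : Fin 3 → E3 := ![a, b, c] with hv
  set A : Matrix (Fin 3) (Fin 3) ℝ := Matrix.of (fun i j => v i j) with hA
  have hli : LinearIndependent ℝ (fun i => A i) := by
    have : LinearIndependent ℝ (fun i =>
        (EuclideanSpace.equiv (Fin 3) ℝ).toLinearEquiv (v i)) :=
      h.map' _ (EuclideanSpace.equiv (Fin 3) ℝ).toLinearEquiv.ker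
    exact this
  have hunit : IsUnit A := Matrix.linearIndependent_rows_iff_isUnit.mp hli
  have hdet : A.det ≠ 0 := by
    intro h0
    exact (by simpa [h0] using hunit.map Matrix.detMonoidHom : IsUnit (0:ℝ)).ne_zero rfl
  have hM : (A * A.transpose).det = A.det ^ 2 := by
    rw [Matrix.det_mul, Matrix.det_transpose, sq]
  have hpos : 0 < (A * A.transpose).det := by
    rw [hM]; exact pow_two_pos_of_ne_zero hdet
  have hentry : ∀ i j, (A * A.transpose) i j = (inner ℝ (v i) (v j) : ℝ) := by
    intro i j
    simp only [Matrix.mul_apply, Matrix.transpose_apply, PiLp.inner_apply,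
      RCLike.inner_apply, conj_trivial, hA, Matrix.of_apply]
    exact Finset.sum_congr rfl (fun _ _ => mul_comm _ _)
  rw [Matrix.det_fin_three] at hpos
  simp only [hentry] at hpos
  simp only [show v 0 = a from rfl, show v 1 = b from rfl, show v 2 = c from rfl] at hpos
  rw [real_inner_comm a b, real_inner_comm a c, real_inner_comm b c] at hpos
  nlinarith [hpos]

lemma inner_lt_of_ne (r : ℝ) (hr : 0 < r) (p q : E3) (hp : ‖p‖ = r) (hq : ‖q‖ = r)
    (hne : p ≠ q) : (inner ℝ p q : ℝ) < r ^ 2 := by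
  have h : (inner ℝ p q : ℝ) < ‖p‖ * ‖q‖ := by
    rw [inner_lt_norm_mul_iff_real, hp, hq]
    intro hcon
    exact hne (smul_right_injective E3 (ne_of_gt hr) hcon)
  rw [hp, hq, ← sq] at h
  exact h

lemma inner_bounds (r : ℝ) (hr : 0 < r) (p q : E3) (hp : ‖p‖ = r) (hq : ‖q‖ = r)
    (h1 : p ≠ q) (h2 : p ≠ -q) :
    -r ^ 2 < (inner ℝ p q : ℝ) ∧ (inner ℝ p q : ℝ) < r ^ 2 := by
  refine ⟨?_, inner_lt_of_ne r hr p q hp hq h1⟩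
  have h := inner_lt_of_ne r hr p (-q) hp (by rw [norm_neg, hq]) h2
  rw [inner_neg_right] at h
  linarith

lemma sph_midpoint_eq (r : ℝ) (hr : 0 < r) (p q m : E3) (hp : ‖p‖ = r) (hq : ‖q‖ = r)
    (h1 : p ≠ q) (h2 : p ≠ -q) (hm : IsSphMidpoint r p q m) :
    ∃ t : ℝ, 0 < t ∧ t ^ 2 * (2 * (1 + (inner ℝ p q : ℝ) / r ^ 2)) = 1 ∧ m = t • (p + q) := by
  obtain ⟨hmn', heq, hsum⟩ := hm
  have hmn : ‖m‖ = r := hmn'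
  have hr2 : (0:ℝ) < r ^ 2 := by positivity
  set x : ℝ := (inner ℝ p q : ℝ) / r ^ 2 with hxdef
  obtain ⟨hil, hiu⟩ := inner_bounds r hr p q hp hq h1 h2
  have hx1 : x < 1 := (div_lt_one hr2).mpr hiu
  have hx2 : -1 < x := (lt_div_iff₀ hr2).mpr (by linarith)
  set θ := Real.arccos x with hθdef
  have hθpos : 0 < θ := Real.arccos_pos.2 hx1
  have hθlt : θ < Real.pi := by
    rcases lt_or_eq_of_le (Real.arccos_le_pi x) with h | h
    · exact h
    · have := Real.arccos_eq_pi.mp h; linarith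
  set u : ℝ := (inner ℝ p m : ℝ) / r ^ 2 with hudef
  set u' : ℝ := (inner ℝ m q : ℝ) / r ^ 2 with hu'def
  have habs : |(inner ℝ p m : ℝ)| ≤ r ^ 2 := by
    have := abs_real_inner_le_norm p m
    rw [hp, hmn, ← sq] at this; exact this
  have habs' : |(inner ℝ m q : ℝ)| ≤ r ^ 2 := by
    have := abs_real_inner_le_norm m q
    rw [hq, hmn, ← sq] at this; exact this
  have hu_l : -1 ≤ u := (le_div_iff₀ hr2).mpr (by nlinarith [abs_le.mp habs])
  have hu_u : u ≤ 1 := (div_le_one hr2).mpr (by nlinarith [abs_le.mp habs])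
  have hu'_l : -1 ≤ u' := (le_div_iff₀ hr2).mpr (by nlinarith [abs_le.mp habs'])
  have hu'_u : u' ≤ 1 := (div_le_one hr2).mpr (by nlinarith [abs_le.mp habs'])
  have heq' : Real.arccos u = Real.arccos u' :=
    mul_left_cancel₀ (ne_of_gt hr) heq
  have hsum' : Real.arccos u + Real.arccos u' = θ := by
    have : r * Real.arccos u + r * Real.arccos u' = r * θ := hsum
    have h2 : r * (Real.arccos u + Real.arccos u') = r * θ := by ring_nf; ring_nf at this; linarith
    exact mul_left_cancel₀ (ne_of_gt hr) h2
  have harcu : Real.arccos u = θ / 2 := by rw [heq'] at hsum' ⊢; linarith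
  have hcu : u = Real.cos (θ / 2) := by rw [← harcu, Real.cos_arccos hu_l hu_u]
  have hcu' : u' = Real.cos (θ / 2) := by
    rw [← harcu, heq', Real.cos_arccos hu'_l hu'_u]
  set cc := Real.cos (θ / 2) with hccdef
  have hccpos : 0 < cc := by
    apply Real.cos_pos_of_mem_Ioo
    constructor
    · have := Real.pi_pos; linarith
    · linarith
  have h2θ : 2 * (θ / 2) = θ := by ring
  have hcsq : cc ^ 2 = (1 + x) / 2 := by
    have h := Real.cos_sq (θ / 2)
    rw [h2θ, hθdef, Real.cos_arccos hx2.le hx1.le] at h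
    rw [hccdef, h]; ring
  have hx1p : 0 < 1 + x := by linarith
  have hip : (inner ℝ m p : ℝ) = r ^ 2 * cc := by
    rw [real_inner_comm]
    have h : (inner ℝ p m : ℝ) = u * r ^ 2 := by rw [hudef]; field_simp
    rw [h, hcu]; ring
  have hiq : (inner ℝ m q : ℝ) = r ^ 2 * cc := by
    have h : (inner ℝ m q : ℝ) = u' * r ^ 2 := by rw [hu'def]; field_simp
    rw [h, hcu']; ring
  have hpq2 : ‖p + q‖ ^ 2 = 2 * r ^ 2 + 2 * r ^ 2 * x := by
    rw [norm_add_sq_real, hp, hq]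
    have h : (inner ℝ p q : ℝ) = x * r ^ 2 := by rw [hxdef]; field_simp
    rw [h]; ring
  clear_value cc θ u u' x
  clear hcu hcu' harcu heq' hsum' heq hsum habs habs' hu_l hu_u hu'_l hu'_u hθpos hθlt hxdef hudef hu'def hθdef hccdef
  have hcc0 : (2 * cc)⁻¹ > 0 := by positivity
  refine ⟨(2 * cc)⁻¹, hcc0, ?_, ?_⟩
  · have hcc : cc ≠ 0 := ne_of_gt hccpos
    field_simp
    nlinarith [hcsq]
  · have hsub : ‖m - (2 * cc)⁻¹ • (p + q)‖ ^ 2 = 0 := by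
      rw [norm_sub_sq_real, inner_smul_right, inner_add_right, norm_smul, mul_pow,
        hip, hiq, hmn, hpq2]
      rw [norm_inv, Real.norm_eq_abs, abs_of_pos (by positivity : (0:ℝ) < 2 * cc)]
      have hcc : cc ≠ 0 := ne_of_gt hccpos
      field_simp
      linear_combination (-2*r^2) * hcsq
    have h0 : m - (2 * cc)⁻¹ • (p + q) = 0 := by
      rw [← norm_eq_zero]
      exact pow_eq_zero_iff two_ne_zero |>.mp hsub
    rw [sub_eq_zero] at h0
    exact h0

set_option maxHeartbeats 1000000 in
/-- **The midchord lemma** (Lemma 2).  Let `△abc` be a geodesic triangle on the sphere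
`S_r` with side length `A = d_r(b,c)` opposite `a`.  If `b'` and `c'` are the midpoints
of the minimal geodesic arcs `ab` and `ac` respectively, then `d_r(b',c') > A / 2`.
(In the plane the midchord would have length exactly `A / 2`.) -/
theorem spherical_midchord_long (r : ℝ) (hr : 0 < r) (a b c b' c' : E3)
    (htri : SphTriangle r a b c)
    (hb' : IsSphMidpoint r a b b') (hc' : IsSphMidpoint r a c c') :
    sdist r b' c' > sdist r b c / 2 := by
  obtain ⟨ha1, hb1, hc1, hab, hac, hbc, hab', hac', hbc', hli⟩ := htri
  have haN : ‖a‖ = r := ha1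
  have hbN : ‖b‖ = r := hb1
  have hcN : ‖c‖ = r := hc1
  have hb'N : ‖b'‖ = r := hb'.1
  have hc'N : ‖c'‖ = r := hc'.1
  have hr2 : (0:ℝ) < r ^ 2 := by positivity
  obtain ⟨tb, htb0, htbsq, hbeq⟩ := sph_midpoint_eq r hr a b b' haN hbN hab hab' hb'
  obtain ⟨tc, htc0, htcsq, hceq⟩ := sph_midpoint_eq r hr a c c' haN hcN hac hac' hc'
  set x : ℝ := (inner ℝ a b : ℝ) / r ^ 2 with hxdef
  set y : ℝ := (inner ℝ a c : ℝ) / r ^ 2 with hydef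
  set z : ℝ := (inner ℝ b c : ℝ) / r ^ 2 with hzdef
  obtain ⟨hxl, hxu⟩ := inner_bounds r hr a b haN hbN hab hab'
  obtain ⟨hyl, hyu⟩ := inner_bounds r hr a c haN hcN hac hac'
  obtain ⟨hzl, hzu⟩ := inner_bounds r hr b c hbN hcN hbc hbc'
  have hx1 : x < 1 := (div_lt_one hr2).mpr hxu
  have hx2 : -1 < x := (lt_div_iff₀ hr2).mpr (by linarith)
  have hy1 : y < 1 := (div_lt_one hr2).mpr hyu
  have hy2 : -1 < y := (lt_div_iff₀ hr2).mpr (by linarith)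
  have hz1 : z < 1 := (div_lt_one hr2).mpr hzu
  have hz2 : -1 < z := (lt_div_iff₀ hr2).mpr (by linarith)
  have h1x : (0:ℝ) < 1 + x := by linarith
  have h1y : (0:ℝ) < 1 + y := by linarith
  have h1z : (0:ℝ) < 1 + z := by linarith
  -- Gram determinant positivity
  have hG := gram_pos a b c hli
  rw [real_inner_self_eq_norm_sq, real_inner_self_eq_norm_sq, real_inner_self_eq_norm_sq,
    haN, hbN, hcN] at hG
  have hr6 : (0:ℝ) < r ^ 6 := by positivity
  have hD : 0 < 1 + 2 * x * y * z - x ^ 2 - y ^ 2 - z ^ 2 := by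
    have heq : 1 + 2 * x * y * z - x ^ 2 - y ^ 2 - z ^ 2 =
        (r ^ 2 * r ^ 2 * r ^ 2 + 2 * (inner ℝ a b : ℝ) * (inner ℝ a c : ℝ) * (inner ℝ b c : ℝ)
          - r ^ 2 * (inner ℝ b c : ℝ) ^ 2 - r ^ 2 * (inner ℝ a c : ℝ) ^ 2
          - r ^ 2 * (inner ℝ a b : ℝ) ^ 2) / r ^ 6 := by
      rw [hxdef, hydef, hzdef]; field_simp; ring
    rw [heq]
    exact div_pos (by linarith) hr6
  have h2 : (1 + x + y + z) ^ 2 < 2 * (1 + x) * (1 + y) * (1 + z) := by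
    have hring : 2 * (1 + x) * (1 + y) * (1 + z) - (1 + x + y + z) ^ 2 =
        1 + 2 * x * y * z - x ^ 2 - y ^ 2 - z ^ 2 := by ring
    linarith [hD, hring]
  -- half-angle cosine for the base side
  set φ := Real.arccos z with hφdef
  have hφpos : 0 < φ := Real.arccos_pos.2 hz1
  have hφlt : φ < Real.pi := by
    rcases lt_or_eq_of_le (Real.arccos_le_pi z) with h | h
    · exact h
    · have := Real.arccos_eq_pi.mp h; linarith
  set cφ := Real.cos (φ / 2) with hcφdef
  have hcφpos : 0 < cφ := by
    apply Real.cos_pos_of_mem_Ioo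
    constructor
    · have := Real.pi_pos; linarith
    · linarith
  have hcφsq : cφ ^ 2 = (1 + z) / 2 := by
    have h := Real.cos_sq (φ / 2)
    have h2θ : 2 * (φ / 2) = φ := by ring
    rw [h2θ, hφdef, Real.cos_arccos hz2.le hz1.le] at h
    rw [hcφdef, h]; ring
  -- the midchord inner ℝ product
  have hin : (inner ℝ b' c' : ℝ) =
      tb * tc * (r ^ 2 + (inner ℝ a c : ℝ) + (inner ℝ a b : ℝ) + (inner ℝ b c : ℝ)) := by
    rw [hbeq, hceq, real_inner_smul_left, real_inner_smul_right, inner_add_left,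
      inner_add_right, inner_add_right, real_inner_self_eq_norm_sq, haN,
      real_inner_comm b a]
    ring
  set w : ℝ := (inner ℝ b' c' : ℝ) / r ^ 2 with hwdef
  have hw_eq : w = tb * tc * (1 + x + y + z) := by
    rw [hwdef, hin, hxdef, hydef, hzdef]; field_simp; ring
  have habs : |(inner ℝ b' c' : ℝ)| ≤ r ^ 2 := by
    have := abs_real_inner_le_norm b' c'
    rw [hb'N, hc'N, ← sq] at this; exact this
  have hw_l : -1 ≤ w := (le_div_iff₀ hr2).mpr (by linarith [(abs_le.mp habs).1, (abs_le.mp habs).2])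
  have hw_u : w ≤ 1 := (div_le_one hr2).mpr (by linarith [(abs_le.mp habs).1, (abs_le.mp habs).2])
  -- the key inequality w < cφ
  have hkey : w < cφ := by
    rcases le_or_gt (1 + x + y + z) 0 with hle | hlt
    · have hw0 : w ≤ 0 := by
        rw [hw_eq]
        exact mul_nonpos_of_nonneg_of_nonpos (mul_pos htb0 htc0).le hle
      linarith
    · have hprod : (tb ^ 2 * (2 * (1 + x))) * (tc ^ 2 * (2 * (1 + y))) = 1 := by
        rw [htbsq, htcsq]; ring
      have h3 : (tb * tc) ^ 2 * ((1 + x + y + z) ^ 2)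
          < (tb * tc) ^ 2 * (2 * (1 + x) * (1 + y) * (1 + z)) :=
        mul_lt_mul_of_pos_left h2 (by positivity)
      have h4 : (tb * tc) ^ 2 * (2 * (1 + x) * (1 + y) * (1 + z)) = (1 + z) / 2 := by
        linear_combination ((1 + z) / 2) * hprod
      have hsq : w ^ 2 < cφ ^ 2 := by
        rw [hw_eq, hcφsq]
        calc (tb * tc * (1 + x + y + z)) ^ 2
            = (tb * tc) ^ 2 * ((1 + x + y + z) ^ 2) := by ring
          _ < (tb * tc) ^ 2 * (2 * (1 + x) * (1 + y) * (1 + z)) := h3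
          _ = (1 + z) / 2 := h4
      exact lt_of_pow_lt_pow_left₀ 2 hcφpos.le hsq
  -- conclude
  have harc : Real.arccos cφ < Real.arccos w :=
    Real.strictAntiOn_arccos ⟨hw_l, hw_u⟩ ⟨Real.neg_one_le_cos _, Real.cos_le_one _⟩ hkey
  have hhalf : φ / 2 = Real.arccos cφ := by
    rw [hcφdef, Real.arccos_cos (by linarith) (by linarith [Real.pi_pos])]
  have hL : sdist r b' c' = r * Real.arccos w := rfl
  have hR : sdist r b c = r * φ := rfl
  rw [hL, hR]
  have : r * φ / 2 = r * (φ / 2) := by ring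
  rw [this, hhalf]
  exact mul_lt_mul_of_pos_left harc hr
end
end

section
/- Let △abc be a geodesic triangle on the sphere S_r with side lengths A = d_r(b,c), B = d_r(a,c), C = d_r(a,b). Define a sequence of geodesic triangles with common apex a as follows: T₀ = △abc, and for i ≥ 1, Tᵢ is the triangle whose vertices are a together with the midpoints of the two sides of Tᵢ₋₁ incident to a (so the two sides of Tᵢ at a have lengths B/2ⁱ and C/2ⁱ); let sᵢ denote the length of the third side of Tᵢ (the i-th midchord). Then the sequence i ↦ 2ⁱ·sᵢ (with s₀ = A) is strictly increasing; in particular sᵢ > A/2ⁱ for every i ≥ 1. -/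
noncomputable section

section AuxLemmas
open Real


lemma trig_identity (k u v : ℝ) :
    (1 + cos (2*u) * cos (2*v) + k * sin (2*u) * sin (2*v))/2
      - (cos u * cos v + k * sin u * sin v)^2 = (1-k^2) * sin u ^2 * sin v^2 := by
  rw [cos_two_mul, cos_two_mul, sin_two_mul, sin_two_mul]
  have h1 := sin_sq_add_cos_sq u
  have h2 := sin_sq_add_cos_sq v
  nlinarith [h1, h2, sq_nonneg (sin u), sq_nonneg (sin v)]

lemma comb_bounds {k θ σ : ℝ} (hk1 : -1 < k) (hk2 : k < 1)
    (hsθ : 0 < sin θ) (hsσ : 0 < sin σ) :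
    -1 < cos θ * cos σ + k * sin θ * sin σ ∧ cos θ * cos σ + k * sin θ * sin σ ≤ 1 := by
  constructor
  · have h := cos_add θ σ
    have := neg_one_le_cos (θ + σ)
    nlinarith [mul_pos hsθ hsσ]
  · have h := cos_sub θ σ
    have := cos_le_one (θ - σ)
    nlinarith [mul_pos hsθ hsσ]

lemma key_ineq (k θ σ : ℝ) (hk1 : -1 < k) (hk2 : k < 1)
    (hθ1 : 0 < θ) (hθ2 : θ < π) (hσ1 : 0 < σ) (hσ2 : σ < π) :
    Real.arccos (cos θ * cos σ + k * sin θ * sin σ)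
      < 2 * Real.arccos (cos (θ/2) * cos (σ/2) + k * sin (θ/2) * sin (σ/2)) := by
  have hsθ : 0 < sin θ := sin_pos_of_pos_of_lt_pi hθ1 hθ2
  have hsσ : 0 < sin σ := sin_pos_of_pos_of_lt_pi hσ1 hσ2
  have hsu : 0 < sin (θ/2) := sin_pos_of_pos_of_lt_pi (by linarith) (by linarith [pi_pos])
  have hsv : 0 < sin (σ/2) := sin_pos_of_pos_of_lt_pi (by linarith) (by linarith [pi_pos])
  obtain ⟨hxgt, hxle⟩ := comb_bounds hk1 hk2 hsθ hsσ
  obtain ⟨hx'gt, hx'le⟩ := comb_bounds hk1 hk2 hsu hsv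
  set x := cos θ * cos σ + k * sin θ * sin σ with hx
  set x' := cos (θ/2) * cos (σ/2) + k * sin (θ/2) * sin (σ/2) with hx'
  have hφlt : arccos x < π := by
    rcases lt_or_eq_of_le (arccos_le_pi x) with h | h
    · exact h
    · exact absurd (arccos_eq_pi.mp h) (by linarith)
  have hψpos : 0 < cos (arccos x / 2) :=
    cos_pos_of_mem_Ioo ⟨by linarith [pi_pos, arccos_nonneg x], by linarith⟩
  have hid := trig_identity k (θ/2) (σ/2)
  rw [show 2*(θ/2) = θ by ring, show 2*(σ/2) = σ by ring] at hid
  have hcos : cos (arccos x / 2)^2 = (1+x)/2 := by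
    rw [cos_sq, show 2*(arccos x/2) = arccos x by ring, cos_arccos hxgt.le hxle]; ring
  have h1k : 0 < 1 - k^2 := by nlinarith
  have hpos : 0 < (1-k^2) * sin (θ/2)^2 * sin (σ/2)^2 := by positivity
  have hkey : x' < cos (arccos x / 2) := by nlinarith [hψpos, hid, hcos, hpos]
  by_contra hcon
  push_neg at hcon
  have h1 : arccos x' ≤ arccos x / 2 := by linarith
  have h2 : cos (arccos x / 2) ≤ cos (arccos x') :=
    cos_le_cos_of_nonneg_of_le_pi (arccos_nonneg x') (by linarith [arccos_le_pi x, pi_pos]) h1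
  rw [cos_arccos hx'gt.le hx'le] at h2
  linarith

/-- strict Cauchy-Schwarz for sphere points. -/
lemma inner_lt_sq {r : ℝ} (hr : 0 < r) {a p : E3} (ha : ‖a‖ = r) (hp : ‖p‖ = r)
    (hne : a ≠ p) : (inner ℝ a p : ℝ) < r ^ 2 := by
  rcases lt_or_eq_of_le (real_inner_le_norm a p) with h | h
  · rw [ha, hp] at h; nlinarith
  · exfalso
    have := inner_eq_norm_mul_iff_real.mp h
    rw [ha, hp] at this
    exact hne (smul_right_injective E3 (ne_of_gt hr) this)

lemma sphere_coord {r : ℝ} (hr : 0 < r) {a p : E3} (ha : ‖a‖ = r) (hp : ‖p‖ = r)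
    (h1 : a ≠ p) (h2 : a ≠ -p) :
    ∃ v : E3, ‖v‖ = 1 ∧ (inner ℝ a v : ℝ) = 0 ∧
      Real.arccos ((inner ℝ a p : ℝ)/r^2) ∈ Set.Ioo 0 π ∧
      p = Real.cos (Real.arccos ((inner ℝ a p : ℝ)/r^2)) • a
          + (r * Real.sin (Real.arccos ((inner ℝ a p : ℝ)/r^2))) • v := by
  have hr2 : (0:ℝ) < r^2 := by positivity
  have hub : (inner ℝ a p : ℝ) < r^2 := inner_lt_sq hr ha hp h1
  have hlb : -(r^2) < (inner ℝ a p : ℝ) := by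
    have hnp : ‖-p‖ = r := by rw [norm_neg]; exact hp
    have := inner_lt_sq hr ha hnp h2
    rw [inner_neg_right] at this
    linarith
  set t : ℝ := (inner ℝ a p : ℝ)/r^2 with ht
  have ht1 : -1 < t := by rw [ht]; rw [lt_div_iff₀ hr2]; linarith
  have ht2 : t < 1 := by rw [ht, div_lt_iff₀ hr2]; linarith
  set β := Real.arccos t with hβ
  have hβ1 : 0 < β := Real.arccos_pos.mpr ht2
  have hβ2 : β < π := by
    rcases lt_or_eq_of_le (Real.arccos_le_pi t) with h | h
    · exact h
    · exact absurd (Real.arccos_eq_pi.mp h) (by linarith)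
  have hcosβ : Real.cos β = t := Real.cos_arccos ht1.le ht2.le
  have hsinβ : 0 < Real.sin β := Real.sin_pos_of_pos_of_lt_pi hβ1 hβ2
  have hsin_sq : Real.sin β ^ 2 = 1 - t^2 := by
    have := Real.sin_sq_add_cos_sq β; rw [hcosβ] at this; linarith
  set q : E3 := p - Real.cos β • a with hq
  have hap : (inner ℝ a p : ℝ) = t * r^2 := by rw [ht]; field_simp
  have haq : (inner ℝ a q : ℝ) = 0 := by
    rw [hq, inner_sub_right, real_inner_smul_right, real_inner_self_eq_norm_sq, ha, hap, hcosβ]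
    ring
  have hqn : ‖q‖ = r * Real.sin β := by
    have h1 : ‖q‖^2 = (r * Real.sin β)^2 := by
      rw [hq, norm_sub_sq_real, real_inner_smul_right, norm_smul, hcosβ, real_inner_comm a p, hap, hp, ha]
      have : (‖(t:ℝ)‖ * r)^2 = t^2 * r^2 := by
        rw [Real.norm_eq_abs]; rw [mul_pow, sq_abs]
      rw [this]
      nlinarith [hsin_sq]
    nlinarith [norm_nonneg q, mul_pos hr hsinβ, sq_nonneg (‖q‖ - r * Real.sin β), sq_nonneg (‖q‖ + r * Real.sin β)]
  have hqne : (0:ℝ) < r * Real.sin β := mul_pos hr hsinβ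
  refine ⟨(r * Real.sin β)⁻¹ • q, ?_, ?_, ⟨hβ1, hβ2⟩, ?_⟩
  · rw [norm_smul, hqn, Real.norm_eq_abs, abs_inv, abs_of_pos hqne]
    field_simp
  · rw [real_inner_smul_right, haq]; ring
  · rw [smul_smul, mul_inv_cancel₀ (ne_of_gt hqne), one_smul, hq]
    abel

lemma sdist_coord {r : ℝ} (hr : 0 < r) {a v w : E3} (ha : ‖a‖ = r)
    (hav : (inner ℝ a v : ℝ) = 0) (haw : (inner ℝ a w : ℝ) = 0) (θ σ : ℝ) :
    sdist r (Real.cos θ • a + (r * Real.sin θ) • v) (Real.cos σ • a + (r * Real.sin σ) • w)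
      = r * Real.arccos (Real.cos θ * Real.cos σ + (inner ℝ v w : ℝ) * Real.sin θ * Real.sin σ) := by
  have hva : (inner ℝ v a : ℝ) = 0 := by rw [real_inner_comm]; exact hav
  have hinner : (inner ℝ (Real.cos θ • a + (r * Real.sin θ) • v) (Real.cos σ • a + (r * Real.sin σ) • w) : ℝ)
      = r^2 * (Real.cos θ * Real.cos σ + (inner ℝ v w : ℝ) * Real.sin θ * Real.sin σ) := by
    rw [inner_add_left, inner_add_right, inner_add_right, real_inner_smul_left,
      real_inner_smul_left, real_inner_smul_left, real_inner_smul_left,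
      real_inner_smul_right, real_inner_smul_right, real_inner_smul_right, real_inner_smul_right,
      real_inner_self_eq_norm_sq, ha, haw, hva]
    ring
  rw [sdist, hinner]
  have : r^2 * (Real.cos θ * Real.cos σ + (inner ℝ v w : ℝ) * Real.sin θ * Real.sin σ) / r^2
      = Real.cos θ * Real.cos σ + (inner ℝ v w : ℝ) * Real.sin θ * Real.sin σ := by
    field_simp
  rw [this]

lemma sdist_apex {r : ℝ} (hr : 0 < r) {a v : E3} (ha : ‖a‖ = r) (hv : ‖v‖ = 1)
    (hav : (inner ℝ a v : ℝ) = 0) {θ : ℝ} (hθ1 : 0 ≤ θ) (hθ2 : θ ≤ π) :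
    sdist r a (Real.cos θ • a + (r * Real.sin θ) • v) = r * θ := by
  have : (inner ℝ a (Real.cos θ • a + (r * Real.sin θ) • v) : ℝ) = r^2 * Real.cos θ := by
    rw [inner_add_right, real_inner_smul_right, real_inner_smul_right,
      real_inner_self_eq_norm_sq, ha, hav]
    ring
  rw [sdist, this]
  have h2 : r^2 * Real.cos θ / r^2 = Real.cos θ := by field_simp
  rw [h2, Real.arccos_cos hθ1 hθ2]

set_option maxHeartbeats 1000000 in
lemma mid_step {r : ℝ} (hr : 0 < r) {a v m : E3} (ha : ‖a‖ = r) (hv : ‖v‖ = 1)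
    (hav : (inner ℝ a v : ℝ) = 0) {θ : ℝ} (hθ1 : 0 < θ) (hθ2 : θ < π)
    (hm : IsSphMidpoint r a (Real.cos θ • a + (r * Real.sin θ) • v) m) :
    m = Real.cos (θ/2) • a + (r * Real.sin (θ/2)) • v := by
  obtain ⟨hmn, heq, hsum⟩ := hm
  have hmn' : ‖m‖ = r := hmn
  have hr2 : (0:ℝ) < r^2 := by positivity
  set p : E3 := Real.cos θ • a + (r * Real.sin θ) • v with hp
  have hap : sdist r a p = r * θ := sdist_apex hr ha hv hav hθ1.le hθ2.le
  have ham : sdist r a m = r * (θ/2) := by rw [hap] at hsum; linarith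
  have hmp : sdist r m p = r * (θ/2) := by rw [hap] at hsum; linarith
  have hbm : |(inner ℝ a m : ℝ)| ≤ r^2 := by
    have := abs_real_inner_le_norm a m
    rw [ha, hmn'] at this; nlinarith
  have hpn : ‖p‖ = r := by
    have h1 : ‖p‖^2 = r^2 := by
      rw [hp, norm_add_sq_real, real_inner_smul_left, real_inner_smul_right, hav,
        norm_smul, norm_smul, ha, hv, Real.norm_eq_abs, Real.norm_eq_abs]
      have hsq := Real.sin_sq_add_cos_sq θ
      rw [mul_pow, mul_pow, sq_abs, sq_abs]
      nlinarith
    nlinarith [norm_nonneg p, sq_nonneg (‖p‖ - r), sq_nonneg (‖p‖ + r)]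
  have hbmp : |(inner ℝ m p : ℝ)| ≤ r^2 := by
    have := abs_real_inner_le_norm m p
    rw [hmn', hpn] at this; nlinarith
  have hθ2' : θ/2 < π/2 := by linarith
  have hc : 0 < Real.cos (θ/2) := Real.cos_pos_of_mem_Ioo ⟨by linarith [Real.pi_pos], hθ2'⟩
  have hs : 0 < Real.sin (θ/2) := Real.sin_pos_of_pos_of_lt_pi (by linarith) (by linarith [Real.pi_pos])
  have hiam : (inner ℝ a m : ℝ) = r^2 * Real.cos (θ/2) := by
    have h1 : Real.arccos ((inner ℝ a m : ℝ)/r^2) = θ/2 := by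
      rw [sdist] at ham
      exact mul_left_cancel₀ (ne_of_gt hr) ham
    have h2 := congrArg Real.cos h1
    rw [Real.cos_arccos (by rw [le_div_iff₀ hr2]; nlinarith [abs_le.mp hbm])
      (by rw [div_le_one hr2]; nlinarith [abs_le.mp hbm])] at h2
    rw [div_eq_iff (ne_of_gt hr2)] at h2
    linarith
  have himp : (inner ℝ m p : ℝ) = r^2 * Real.cos (θ/2) := by
    have h1 : Real.arccos ((inner ℝ m p : ℝ)/r^2) = θ/2 := by
      rw [sdist] at hmp
      exact mul_left_cancel₀ (ne_of_gt hr) hmp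
    have h2 := congrArg Real.cos h1
    rw [Real.cos_arccos (by rw [le_div_iff₀ hr2]; nlinarith [abs_le.mp hbmp])
      (by rw [div_le_one hr2]; nlinarith [abs_le.mp hbmp])] at h2
    rw [div_eq_iff (ne_of_gt hr2)] at h2
    linarith
  have hscq := Real.sin_sq_add_cos_sq (θ/2)
  have hima : (inner ℝ m a : ℝ) = r^2 * Real.cos (θ/2) := (real_inner_comm a m).trans hiam
  have hmpexp : (inner ℝ m p : ℝ)
      = Real.cos θ * (inner ℝ m a : ℝ) + (r * Real.sin θ) * (inner ℝ m v : ℝ) := by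
    rw [hp, inner_add_right, real_inner_smul_right, real_inner_smul_right]
  have hlin : (r:ℝ)^2 * Real.cos (θ/2)
      = Real.cos θ * (r^2 * Real.cos (θ/2)) + (r * Real.sin θ) * (inner ℝ m v : ℝ) := by
    rw [hima, himp] at hmpexp
    linarith
  rw [show Real.cos θ = 2 * Real.cos (θ/2)^2 - 1 by
        rw [← Real.cos_two_mul]; congr 1; ring,
      show Real.sin θ = 2 * Real.sin (θ/2) * Real.cos (θ/2) by
        rw [← Real.sin_two_mul]; congr 1; ring] at hlin
  have hmv : (inner ℝ m v : ℝ) = r * Real.sin (θ/2) := by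
    have hpos : (0:ℝ) < 2 * Real.sin (θ/2) * Real.cos (θ/2) * r := by positivity
    apply mul_left_cancel₀ (ne_of_gt hpos)
    linear_combination (-1:ℝ) * hlin + (-2*r^2*Real.cos (θ/2)) * hscq
  set q : E3 := m - Real.cos (θ/2) • a with hq
  have hqv : (inner ℝ q v : ℝ) = r * Real.sin (θ/2) := by
    rw [hq, inner_sub_left, real_inner_smul_left, hmv, hav]
    ring
  have hqn : ‖q‖ = r * Real.sin (θ/2) := by
    have h1 : ‖q‖^2 = (r * Real.sin (θ/2))^2 := by
      rw [hq, norm_sub_sq_real, real_inner_smul_right, real_inner_comm a m, hiam,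
        norm_smul, hmn', ha, Real.norm_eq_abs, mul_pow, sq_abs]
      nlinarith [hscq]
    nlinarith [norm_nonneg q, mul_pos hr hs, sq_nonneg (‖q‖ - r * Real.sin (θ/2)),
      sq_nonneg (‖q‖ + r * Real.sin (θ/2))]
  have hcs : (inner ℝ q v : ℝ) = ‖q‖ * ‖v‖ := by rw [hqn, hv, hqv, mul_one]
  have := inner_eq_norm_mul_iff_real.mp hcs
  rw [hv, one_smul, hqn] at this
  rw [hq] at this
  rw [sub_eq_iff_eq_add] at this
  rw [this]
  abel

lemma not_coplanar {r : ℝ} {a b0 c0 v w : E3} {β γ : ℝ}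
    (hli : LinearIndependent ℝ ![a, b0, c0])
    (hbeq : b0 = Real.cos β • a + (r * Real.sin β) • v)
    (hceq : c0 = Real.cos γ • a + (r * Real.sin γ) • w)
    (hsγ : Real.sin γ ≠ 0)
    (hvw : w = v ∨ w = -v) : False := by
  have h := Fintype.linearIndependent_iff.mp hli
  rcases hvw with h1 | h1
  · have hz : ∑ i : Fin 3, (![Real.sin β * Real.cos γ - Real.sin γ * Real.cos β,
        Real.sin γ, -Real.sin β] : Fin 3 → ℝ) i • (![a, b0, c0] : Fin 3 → E3) i = 0 := by
      rw [Fin.sum_univ_three]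
      simp only [Matrix.cons_val_zero, Matrix.cons_val_one, Matrix.head_cons,
        Matrix.cons_val_two, Matrix.tail_cons]
      rw [hbeq, hceq, h1]
      module
    have := h _ hz 1
    simp at this
    exact hsγ this
  · have hz : ∑ i : Fin 3, (![-(Real.sin β * Real.cos γ) - Real.sin γ * Real.cos β,
        Real.sin γ, Real.sin β] : Fin 3 → ℝ) i • (![a, b0, c0] : Fin 3 → E3) i = 0 := by
      rw [Fin.sum_univ_three]
      simp only [Matrix.cons_val_zero, Matrix.cons_val_one, Matrix.head_cons,
        Matrix.cons_val_two, Matrix.tail_cons]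
      rw [hbeq, hceq, h1]
      module
    have := h _ hz 1
    simp at this
    exact hsγ this


end AuxLemmas

/-- **The iterated midchord claim** (used in the proof of Lemma 3).
Start from a geodesic triangle `T₀ = △ a (b 0) (c 0)` on the sphere `S_r`, and
repeatedly bisect the two sides at the apex `a`: `b (i+1)` and `c (i+1)` are the
midpoints of the arcs from `a` to `b i` and to `c i` respectively, and
`s i = d_r(b i, c i)` is the `i`-th midchord (`s 0 = A`).  Then the sequence
`i ↦ 2^i * s i` is strictly increasing; in particular `s i > A / 2^i` for `i ≥ 1`. -/
theorem spherical_iterated_midchords (r : ℝ) (hr : 0 < r) (a : E3) (b c : ℕ → E3)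
    (htri : SphTriangle r a (b 0) (c 0))
    (hb : ∀ i, IsSphMidpoint r a (b i) (b (i + 1)))
    (hc : ∀ i, IsSphMidpoint r a (c i) (c (i + 1))) :
    StrictMono (fun i : ℕ => (2 : ℝ) ^ i * sdist r (b i) (c i)) ∧
    ∀ i : ℕ, 1 ≤ i → sdist r (b i) (c i) > sdist r (b 0) (c 0) / 2 ^ i := by
  obtain ⟨ha, hb0, hc0, hab, hac, hbc, hab', hac', hbc', hli⟩ := htri
  have ha' : ‖a‖ = r := ha
  have hb0' : ‖b 0‖ = r := hb0
  have hc0' : ‖c 0‖ = r := hc0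
  obtain ⟨v, hv1, hav, ⟨hβ1, hβ2⟩, hbeq⟩ := sphere_coord hr ha' hb0' hab hab'
  obtain ⟨w, hw1, haw, ⟨hγ1, hγ2⟩, hceq⟩ := sphere_coord hr ha' hc0' hac hac'
  set β := Real.arccos ((inner ℝ a (b 0) : ℝ)/r^2) with hβ
  set γ := Real.arccos ((inner ℝ a (c 0) : ℝ)/r^2) with hγ
  set k : ℝ := (inner ℝ v w : ℝ) with hk
  have hsγ : 0 < Real.sin γ := Real.sin_pos_of_pos_of_lt_pi hγ1 hγ2
  have hk2 : k < 1 := by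
    rcases lt_or_eq_of_le (real_inner_le_norm v w) with h | h
    · rw [hv1, hw1] at h; rw [hk]; linarith
    · exfalso
      have := inner_eq_norm_mul_iff_real.mp h
      rw [hv1, hw1, one_smul, one_smul] at this
      exact not_coplanar hli hbeq hceq (ne_of_gt hsγ) (Or.inl this.symm)
  have hk1 : -1 < k := by
    rcases lt_or_eq_of_le (real_inner_le_norm v (-w)) with h | h
    · rw [hv1, norm_neg, hw1, inner_neg_right] at h; rw [hk]; linarith
    · exfalso
      have := inner_eq_norm_mul_iff_real.mp h
      rw [hv1, norm_neg, hw1, one_smul, one_smul] at this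
      have hwv : w = -v := by rw [this, neg_neg]
      exact not_coplanar hli hbeq hceq (ne_of_gt hsγ) (Or.inr hwv)
  have hpow : ∀ i : ℕ, (1:ℝ) ≤ 2^i := fun i => one_le_pow₀ one_le_two
  have hβi : ∀ i : ℕ, 0 < β/2^i ∧ β/2^i < Real.pi := by
    intro i
    constructor
    · positivity
    · exact lt_of_le_of_lt (div_le_self hβ1.le (hpow i)) hβ2
  have hγi : ∀ i : ℕ, 0 < γ/2^i ∧ γ/2^i < Real.pi := by
    intro i
    constructor
    · positivity
    · exact lt_of_le_of_lt (div_le_self hγ1.le (hpow i)) hγ2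
  have hbi : ∀ i, b i = Real.cos (β/2^i) • a + (r * Real.sin (β/2^i)) • v := by
    intro i
    induction i with
    | zero => simpa using hbeq
    | succ n ih =>
        have hstep := mid_step hr ha' hv1 hav (hβi n).1 (hβi n).2 (ih ▸ hb n)
        rw [div_div, ← pow_succ] at hstep
        exact hstep
  have hci : ∀ i, c i = Real.cos (γ/2^i) • a + (r * Real.sin (γ/2^i)) • w := by
    intro i
    induction i with
    | zero => simpa using hceq
    | succ n ih =>
        have hstep := mid_step hr ha' hw1 haw (hγi n).1 (hγi n).2 (ih ▸ hc n)
        rw [div_div, ← pow_succ] at hstep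
        exact hstep
  have hsd : ∀ i, sdist r (b i) (c i)
      = r * Real.arccos (Real.cos (β/2^i) * Real.cos (γ/2^i)
          + k * Real.sin (β/2^i) * Real.sin (γ/2^i)) := by
    intro i
    rw [hbi i, hci i, sdist_coord hr ha' hav haw]
  have hmono : StrictMono (fun i : ℕ => (2 : ℝ) ^ i * sdist r (b i) (c i)) := by
    apply strictMono_nat_of_lt_succ
    intro i
    rw [hsd i, hsd (i+1)]
    have key := key_ineq k (β/2^i) (γ/2^i) hk1 hk2 (hβi i).1 (hβi i).2 (hγi i).1 (hγi i).2
    have h2i : (0:ℝ) < 2^i := pow_pos two_pos i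
    have hrw1 : β/2^(i+1) = (β/2^i)/2 := by rw [div_div, ← pow_succ]
    have hrw2 : γ/2^(i+1) = (γ/2^i)/2 := by rw [div_div, ← pow_succ]
    rw [hrw1, hrw2]
    calc (2:ℝ)^i * (r * Real.arccos (Real.cos (β/2^i) * Real.cos (γ/2^i)
            + k * Real.sin (β/2^i) * Real.sin (γ/2^i)))
        = (2^i * r) * Real.arccos (Real.cos (β/2^i) * Real.cos (γ/2^i)
            + k * Real.sin (β/2^i) * Real.sin (γ/2^i)) := by ring
      _ < (2^i * r) * (2 * Real.arccos (Real.cos (β/2^i/2) * Real.cos (γ/2^i/2)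
            + k * Real.sin (β/2^i/2) * Real.sin (γ/2^i/2))) :=
          mul_lt_mul_of_pos_left key (mul_pos h2i hr)
      _ = 2^(i+1) * (r * Real.arccos (Real.cos (β/2^i/2) * Real.cos (γ/2^i/2)
            + k * Real.sin (β/2^i/2) * Real.sin (γ/2^i/2))) := by ring
  refine ⟨hmono, ?_⟩
  intro i hi
  have := hmono (show 0 < i from hi)
  simp only [pow_zero, one_mul] at this
  have h2i : (0:ℝ) < 2^i := pow_pos two_pos i
  rw [gt_iff_lt, div_lt_iff₀ h2i]
  linarith [this]
end
end

section
/- Let A, B, C be positive real numbers satisfying the strict triangle inequality, with each less than πr and A + B + C < 2πr, so that there exist both a planar triangle and a geodesic triangle on the sphere S_r with side lengths A, B, C. Then each angle of the spherical triangle is strictly greater than the angle of the planar triangle opposite the side of the same length. Equivalently: when a planar triangle is drawn on a sphere with the same side lengths, all three angles strictly increase, and when a spherical triangle is drawn in the plane with the same side lengths, all three angles strictly decrease. -/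
noncomputable section

open Real

private lemma sdist_comm (r : ℝ) (p q : E3) : sdist r p q = sdist r q p := by
  rw [sdist, sdist, real_inner_comm]
private lemma sinc_lt {u g : ℝ} (hu : 0 < u) (hug : u < g) (hg : g ≤ π) :
    u * Real.sin g < g * Real.sin u := by
  have hg0 : 0 < g := hu.trans hug
  have m0 : (0:ℝ) ∈ Set.Icc (0:ℝ) π := ⟨le_rfl, pi_pos.le⟩
  have mg : g ∈ Set.Icc (0:ℝ) π := ⟨hg0.le, hg⟩
  have hne : (0:ℝ) ≠ g := fun h => absurd h.symm hg0.ne'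
  have ha : (0:ℝ) < 1 - u / g := by rw [sub_pos, div_lt_one hg0]; exact hug
  have hb : (0:ℝ) < u / g := by positivity
  have h := strictConcaveOn_sin_Icc.2 m0 mg hne ha hb (by ring)
  simp only [smul_eq_mul, mul_zero, Real.sin_zero, zero_add] at h
  rw [show u / g * g = u by field_simp] at h
  have := mul_lt_mul_of_pos_right h hg0
  rw [div_mul_eq_mul_div, div_mul_cancel₀ _ hg0.ne'] at this
  linarith

private lemma key_ineq_s4 {α β γ : ℝ} (hα : 0 < α) (hβ : 0 < β) (hγ : 0 < γ)
    (hαπ : α < π) (hβπ : β < π) (hγπ : γ < π)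
    (h1 : α < β + γ) (h2 : β < α + γ) (h3 : γ < α + β)
    (hsum : α + β + γ < 2 * π) :
    -1 < (Real.cos α - Real.cos β * Real.cos γ) / (Real.sin β * Real.sin γ) ∧
    (Real.cos α - Real.cos β * Real.cos γ) / (Real.sin β * Real.sin γ)
      < (β ^ 2 + γ ^ 2 - α ^ 2) / (2 * β * γ) ∧
    (β ^ 2 + γ ^ 2 - α ^ 2) / (2 * β * γ) < 1 := by
  have hsβ : 0 < Real.sin β := Real.sin_pos_of_pos_of_lt_pi hβ hβπ
  have hsγ : 0 < Real.sin γ := Real.sin_pos_of_pos_of_lt_pi hγ hγπ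
  set u : ℝ := (α - β + γ) / 2 with hu_def
  set v : ℝ := (α + β - γ) / 2 with hv_def
  have hu : 0 < u := by simp only [hu_def]; linarith
  have hv : 0 < v := by simp only [hv_def]; linarith
  have huγ : u < γ := by simp only [hu_def]; linarith
  have hvβ : v < β := by simp only [hv_def]; linarith
  have hsu : 0 < Real.sin u := Real.sin_pos_of_pos_of_lt_pi hu (by linarith)
  have hsv : 0 < Real.sin v := Real.sin_pos_of_pos_of_lt_pi hv (by linarith)
  -- identity 1 : sinβ sinγ - (cosα - cosβcosγ) = 2 sin u sin v
  have id1 : Real.sin β * Real.sin γ - (Real.cos α - Real.cos β * Real.cos γ)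
      = 2 * Real.sin u * Real.sin v := by
    have hcsub : Real.cos (β - γ) = Real.cos β * Real.cos γ + Real.sin β * Real.sin γ :=
      Real.cos_sub β γ
    have h' : Real.cos (β - γ) - Real.cos α = 2 * Real.sin u * Real.sin v := by
      rw [Real.cos_sub_cos]
      rw [show (β - γ + α) / 2 = v by rw [hv_def]; ring,
          show (β - γ - α) / 2 = -u by rw [hu_def]; ring, Real.sin_neg]
      ring
    linarith
  -- identity 2 : 2βγ - (β²+γ²-α²) = 4uv
  have id2 : 2 * β * γ - (β ^ 2 + γ ^ 2 - α ^ 2) = 4 * u * v := by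
    rw [hu_def, hv_def]; ring
  -- 1 + X > 0
  have hXgt : -1 < (Real.cos α - Real.cos β * Real.cos γ) / (Real.sin β * Real.sin γ) := by
    have hs' : 0 < Real.sin ((α + β + γ) / 2) :=
      Real.sin_pos_of_pos_of_lt_pi (by linarith) (by linarith)
    have hw : 0 < Real.sin ((β + γ - α) / 2) :=
      Real.sin_pos_of_pos_of_lt_pi (by linarith) (by linarith)
    have id3 : Real.sin β * Real.sin γ + (Real.cos α - Real.cos β * Real.cos γ)
        = 2 * Real.sin ((α + β + γ) / 2) * Real.sin ((β + γ - α) / 2) := by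
      have hcadd : Real.cos (β + γ) = Real.cos β * Real.cos γ - Real.sin β * Real.sin γ :=
        Real.cos_add β γ
      have h' : Real.cos α - Real.cos (β + γ)
          = 2 * Real.sin ((α + β + γ) / 2) * Real.sin ((β + γ - α) / 2) := by
        rw [Real.cos_sub_cos]
        rw [show (α + (β + γ)) / 2 = (α + β + γ) / 2 by ring,
            show (α - (β + γ)) / 2 = -((β + γ - α) / 2) by ring, Real.sin_neg]
        ring
      linarith
    rw [neg_lt, ← neg_div, div_lt_one (by positivity)]
    nlinarith [mul_pos hs' hw]
  refine ⟨hXgt, ?_, ?_⟩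
  · -- main inequality X < Y
    have e1 : (Real.cos α - Real.cos β * Real.cos γ) / (Real.sin β * Real.sin γ)
        = 1 - 2 * Real.sin u * Real.sin v / (Real.sin β * Real.sin γ) := by
      rw [show Real.cos α - Real.cos β * Real.cos γ
          = Real.sin β * Real.sin γ - 2 * Real.sin u * Real.sin v by linarith]
      field_simp
    have e2 : (β ^ 2 + γ ^ 2 - α ^ 2) / (2 * β * γ)
        = 1 - 2 * u * v / (β * γ) := by
      rw [show β ^ 2 + γ ^ 2 - α ^ 2 = 2 * β * γ - 4 * u * v by linarith]
      field_simp
      ring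
    rw [e1, e2]
    have hm : 2 * u * v / (β * γ) < 2 * Real.sin u * Real.sin v / (Real.sin β * Real.sin γ) := by
      rw [div_lt_div_iff₀ (by positivity) (by positivity)]
      have p1 := sinc_lt hu huγ hγπ.le
      have p2 := sinc_lt hv hvβ hβπ.le
      nlinarith [mul_lt_mul'' p1 p2 (by positivity) (by positivity)]
    linarith
  · rw [div_lt_one (by positivity)]
    nlinarith
private lemma inner_of_sdist {r : ℝ} (hr : 0 < r) {a b : E3} (ha : ‖a‖ = r) (hb : ‖b‖ = r)
    {θ : ℝ} (hθ0 : 0 ≤ θ) (hθπ : θ ≤ π) (h : sdist r a b = r * θ) :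
    (inner ℝ a b : ℝ) = r ^ 2 * Real.cos θ := by
  have hx1 : |(inner ℝ a b : ℝ)| ≤ r ^ 2 := by
    have := abs_real_inner_le_norm a b
    rw [ha, hb] at this
    nlinarith
  have hr2 : (0:ℝ) < r ^ 2 := by positivity
  have hmem : (inner ℝ a b : ℝ) / r ^ 2 ∈ Set.Icc (-1 : ℝ) 1 := by
    rw [Set.mem_Icc, le_div_iff₀ hr2, div_le_one hr2]
    constructor <;> [nlinarith [abs_le.1 hx1] ; nlinarith [abs_le.1 hx1]]
  have harc : Real.arccos ((inner ℝ a b : ℝ) / r ^ 2) = θ :=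
    mul_left_cancel₀ hr.ne' h
  have hc := Real.cos_arccos hmem.1 hmem.2
  rw [harc] at hc
  rw [hc, mul_comm, div_mul_cancel₀ _ hr2.ne']

private lemma norm_tangent {r t : ℝ} (hr : 0 < r) {a b : E3}
    (ha : ‖a‖ = r) (hb : ‖b‖ = r) (hab : (inner ℝ a b : ℝ) = r ^ 2 * Real.cos t)
    (hst : 0 ≤ Real.sin t) :
    ‖b - Real.cos t • a‖ = r * Real.sin t := by
  have hsq : ‖b - Real.cos t • a‖ ^ 2 = (r * Real.sin t) ^ 2 := by
    rw [← real_inner_self_eq_norm_sq, inner_sub_left, inner_sub_right, inner_sub_right,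
      real_inner_smul_left, real_inner_smul_left, real_inner_smul_right, real_inner_smul_right,
      real_inner_comm a b, hab, real_inner_self_eq_norm_sq, real_inner_self_eq_norm_sq, ha, hb,
      mul_pow, Real.sin_sq]
    ring
  have h1 : ‖b - Real.cos t • a‖ = Real.sqrt (‖b - Real.cos t • a‖ ^ 2) :=
    (Real.sqrt_sq (norm_nonneg _)).symm
  rw [h1, hsq, Real.sqrt_sq (by positivity)]

private lemma sph_angle_eq {r α β γ : ℝ} (hr : 0 < r) {a b c : E3}
    (ha : ‖a‖ = r) (hb : ‖b‖ = r) (hc : ‖c‖ = r)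
    (hβ : 0 < β) (hβπ : β < π) (hγ : 0 < γ) (hγπ : γ < π)
    (hab : (inner ℝ a b : ℝ) = r ^ 2 * Real.cos γ)
    (hac : (inner ℝ a c : ℝ) = r ^ 2 * Real.cos β)
    (hbc : (inner ℝ b c : ℝ) = r ^ 2 * Real.cos α) :
    sAngle b a c
      = Real.arccos ((Real.cos α - Real.cos β * Real.cos γ) / (Real.sin β * Real.sin γ)) := by
  have hsβ : 0 < Real.sin β := Real.sin_pos_of_pos_of_lt_pi hβ hβπ
  have hsγ : 0 < Real.sin γ := Real.sin_pos_of_pos_of_lt_pi hγ hγπ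
  have haa : (inner ℝ a a : ℝ) = r ^ 2 := by rw [real_inner_self_eq_norm_sq, ha]
  have hT1 : sTangent a b = b - Real.cos γ • a := by
    rw [sTangent, ha, real_inner_comm, hab]
    congr 2
    field_simp
  have hT2 : sTangent a c = c - Real.cos β • a := by
    rw [sTangent, ha, real_inner_comm, hac]
    congr 2
    field_simp
  have hiT : (inner ℝ (b - Real.cos γ • a) (c - Real.cos β • a) : ℝ)
      = r ^ 2 * (Real.cos α - Real.cos β * Real.cos γ) := by
    rw [inner_sub_left, inner_sub_right, inner_sub_right, real_inner_smul_left,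
      real_inner_smul_left, real_inner_smul_right, real_inner_smul_right,
      hbc, haa, real_inner_comm a b, hab, hac]
    ring
  have hn1 := norm_tangent hr ha hb hab hsγ.le
  have hn2 := norm_tangent hr ha hc hac hsβ.le
  rw [sAngle, hT1, hT2, InnerProductGeometry.angle, hiT, hn1, hn2]
  congr 1
  field_simp
private lemma planar_angle_eq {A B C : ℝ} (hB : 0 < B) (hC : 0 < C)
    (p q s : E2) (hqs : dist q s = A) (hps : dist p s = B) (hpq : dist p q = C) :
    EuclideanGeometry.angle q p s = Real.arccos ((B ^ 2 + C ^ 2 - A ^ 2) / (2 * B * C)) := by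
  have hlc := EuclideanGeometry.law_cos q p s
  rw [dist_comm q p, hpq, dist_comm s p, hps, hqs] at hlc
  have hcos : Real.cos (EuclideanGeometry.angle q p s) = (B ^ 2 + C ^ 2 - A ^ 2) / (2 * B * C) := by
    field_simp
    nlinarith [hlc]
  rw [← hcos, Real.arccos_cos (EuclideanGeometry.angle_nonneg q p s)
    (EuclideanGeometry.angle_le_pi q p s)]

private lemma main_aux {r A B C : ℝ} (hr : 0 < r)
    (hA : 0 < A) (hB : 0 < B) (hC : 0 < C)
    (hABC : A < B + C) (hBCA : B < A + C) (hCAB : C < A + B)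
    (hAr : A < π * r) (hBr : B < π * r) (hCr : C < π * r)
    (hsum : A + B + C < 2 * π * r)
    {a b c : E3} {p q s : E2}
    (ha : onSphere r a) (hb : onSphere r b) (hc : onSphere r c)
    (hbc : sdist r b c = A) (hac : sdist r a c = B) (hab : sdist r a b = C)
    (hqs : dist q s = A) (hps : dist p s = B) (hpq : dist p q = C) :
    EuclideanGeometry.angle q p s < sAngle b a c := by
  have ha' : ‖a‖ = r := ha
  have hb' : ‖b‖ = r := hb
  have hc' : ‖c‖ = r := hc
  set α := A / r with hα_def
  set β := B / r with hβ_def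
  set γ := C / r with hγ_def
  have hα : 0 < α := div_pos hA hr
  have hβ : 0 < β := div_pos hB hr
  have hγ : 0 < γ := div_pos hC hr
  have hαπ : α < π := (div_lt_iff₀ hr).2 (by linarith)
  have hβπ : β < π := (div_lt_iff₀ hr).2 (by linarith)
  have hγπ : γ < π := (div_lt_iff₀ hr).2 (by linarith)
  have h1 : α < β + γ := by
    rw [hα_def, hβ_def, hγ_def, ← add_div, div_lt_div_iff_of_pos_right hr]; exact hABC
  have h2 : β < α + γ := by
    rw [hα_def, hβ_def, hγ_def, ← add_div, div_lt_div_iff_of_pos_right hr]; exact hBCA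
  have h3 : γ < α + β := by
    rw [hα_def, hβ_def, hγ_def, ← add_div, div_lt_div_iff_of_pos_right hr]; exact hCAB
  have hsum' : α + β + γ < 2 * π := by
    rw [hα_def, hβ_def, hγ_def, ← add_div, ← add_div, div_lt_iff₀ hr]
    linarith
  have key := key_ineq_s4 hα hβ hγ hαπ hβπ hγπ h1 h2 h3 hsum'
  have iab : (inner ℝ a b : ℝ) = r ^ 2 * Real.cos γ :=
    inner_of_sdist hr ha' hb' hγ.le hγπ.le (by rw [hab, hγ_def, mul_div_cancel₀ _ hr.ne'])
  have iac : (inner ℝ a c : ℝ) = r ^ 2 * Real.cos β :=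
    inner_of_sdist hr ha' hc' hβ.le hβπ.le (by rw [hac, hβ_def, mul_div_cancel₀ _ hr.ne'])
  have ibc : (inner ℝ b c : ℝ) = r ^ 2 * Real.cos α :=
    inner_of_sdist hr hb' hc' hα.le hαπ.le (by rw [hbc, hα_def, mul_div_cancel₀ _ hr.ne'])
  have sph := sph_angle_eq hr ha' hb' hc' hβ hβπ hγ hγπ iab iac ibc
  have pla := planar_angle_eq hB hC p q s hqs hps hpq
  have hYeq : (B ^ 2 + C ^ 2 - A ^ 2) / (2 * B * C) = (β ^ 2 + γ ^ 2 - α ^ 2) / (2 * β * γ) := by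
    rw [hα_def, hβ_def, hγ_def]
    field_simp
  rw [sph, pla, hYeq]
  exact Real.strictAntiOn_arccos ⟨key.1.le, (key.2.1.trans key.2.2).le⟩
    ⟨(key.1.trans key.2.1).le, key.2.2.le⟩ key.2.1
private def v3 (x y z : ℝ) : E3 := (WithLp.equiv 2 (Fin 3 → ℝ)).symm ![x, y, z]
private def v2 (x y : ℝ) : E2 := (WithLp.equiv 2 (Fin 2 → ℝ)).symm ![x, y]

private lemma v3_apply (x y z : ℝ) (i : Fin 3) : v3 x y z i = ![x, y, z] i := rfl

private lemma inner_v3 (x y z x' y' z' : ℝ) :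
    (inner ℝ (v3 x y z) (v3 x' y' z') : ℝ) = x * x' + y * y' + z * z' := by
  simp [v3, PiLp.inner_apply, Fin.sum_univ_three, RCLike.inner_apply, WithLp.equiv_symm_apply]
  ring

private lemma dist_v2 (x y x' y' : ℝ) :
    dist (v2 x y) (v2 x' y') = Real.sqrt ((x - x') ^ 2 + (y - y') ^ 2) := by
  rw [EuclideanSpace.dist_eq]
  simp [v2, Fin.sum_univ_two, WithLp.equiv_symm_apply]
  norm_num [Real.dist_eq, sq_abs]

private lemma norm_eq_of_inner {r : ℝ} (hr : 0 ≤ r) {v : E3} (h : (inner ℝ v v : ℝ) = r ^ 2) :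
    ‖v‖ = r := by
  have h2 : ‖v‖ ^ 2 = r ^ 2 := by rw [← real_inner_self_eq_norm_sq, h]
  rw [← Real.sqrt_sq (norm_nonneg v), h2, Real.sqrt_sq hr]

private lemma noncol {A B C : ℝ} (hA : 0 < A) (hB : 0 < B) (hC : 0 < C)
    (hABC : A < B + C) (hBCA : B < A + C) (hCAB : C < A + B)
    (p q s : E2) (hqs : dist q s = A) (hps : dist p s = B) (hpq : dist p q = C) :
    ¬ Collinear ℝ ({p, q, s} : Set E2) := by
  have hpos : (0:ℝ) < 2 * A * C := by positivity
  have hY2lt : (A ^ 2 + C ^ 2 - B ^ 2) / (2 * A * C) < 1 := by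
    rw [div_lt_one hpos]; nlinarith
  have hY2gt : (-1 : ℝ) < (A ^ 2 + C ^ 2 - B ^ 2) / (2 * A * C) := by
    rw [lt_div_iff₀ hpos]; nlinarith
  have hang : EuclideanGeometry.angle p q s
      = Real.arccos ((A ^ 2 + C ^ 2 - B ^ 2) / (2 * A * C)) :=
    planar_angle_eq hA hC q p s hps hqs (by rw [dist_comm]; exact hpq)
  intro hcol
  rcases EuclideanGeometry.collinear_iff_eq_or_eq_or_angle_eq_zero_or_angle_eq_pi.1 hcol with
    h | h | h | h
  · rw [h, dist_self] at hpq; linarith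
  · rw [h, dist_self] at hqs; linarith
  · rw [hang] at h
    have := Real.arccos_pos.2 hY2lt
    linarith
  · rw [hang] at h
    have := Real.arccos_eq_pi.1 h
    linarith

private lemma cos_bounds {x : ℝ} (h0 : 0 < x) (hπ : x < π) :
    -1 < Real.cos x ∧ Real.cos x < 1 := by
  constructor
  · have := Real.cos_lt_cos_of_nonneg_of_le_pi h0.le le_rfl hπ
    simpa using this
  · have := Real.cos_lt_cos_of_nonneg_of_le_pi le_rfl hπ.le h0
    simpa using this

set_option maxHeartbeats 1000000 in
private lemma sph_exists {r A B C : ℝ} (hr : 0 < r)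
    (hA : 0 < A) (hB : 0 < B) (hC : 0 < C)
    (hABC : A < B + C) (hBCA : B < A + C) (hCAB : C < A + B)
    (hAr : A < π * r) (hBr : B < π * r) (hCr : C < π * r)
    (hsum : A + B + C < 2 * π * r) :
    ∃ a b c : E3, SphTriangle r a b c ∧
      sdist r b c = A ∧ sdist r a c = B ∧ sdist r a b = C := by
  set α := A / r with hα_def
  set β := B / r with hβ_def
  set γ := C / r with hγ_def
  have hα : 0 < α := div_pos hA hr
  have hβ : 0 < β := div_pos hB hr
  have hγ : 0 < γ := div_pos hC hr
  have hαπ : α < π := (div_lt_iff₀ hr).2 (by linarith)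
  have hβπ : β < π := (div_lt_iff₀ hr).2 (by linarith)
  have hγπ : γ < π := (div_lt_iff₀ hr).2 (by linarith)
  have h1 : α < β + γ := by
    rw [hα_def, hβ_def, hγ_def, ← add_div, div_lt_div_iff_of_pos_right hr]; exact hABC
  have h2 : β < α + γ := by
    rw [hα_def, hβ_def, hγ_def, ← add_div, div_lt_div_iff_of_pos_right hr]; exact hBCA
  have h3 : γ < α + β := by
    rw [hα_def, hβ_def, hγ_def, ← add_div, div_lt_div_iff_of_pos_right hr]; exact hCAB
  have hsum' : α + β + γ < 2 * π := by
    rw [hα_def, hβ_def, hγ_def, ← add_div, ← add_div, div_lt_iff₀ hr]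
    linarith
  have key := key_ineq_s4 hα hβ hγ hαπ hβπ hγπ h1 h2 h3 hsum'
  set X : ℝ := (Real.cos α - Real.cos β * Real.cos γ) / (Real.sin β * Real.sin γ) with hX_def
  have hX1 : -1 < X := key.1
  have hX2 : X < 1 := key.2.1.trans key.2.2
  set t : ℝ := Real.arccos X with ht_def
  have hcost : Real.cos t = X := Real.cos_arccos hX1.le hX2.le
  have ht0 : 0 < t := Real.arccos_pos.2 hX2
  have htπ : t < π :=
    lt_of_le_of_ne (Real.arccos_le_pi X) (fun h => by
      have := Real.arccos_eq_pi.1 h; linarith)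
  have hsint : 0 < Real.sin t := Real.sin_pos_of_pos_of_lt_pi ht0 htπ
  have hsβ : 0 < Real.sin β := Real.sin_pos_of_pos_of_lt_pi hβ hβπ
  have hsγ : 0 < Real.sin γ := Real.sin_pos_of_pos_of_lt_pi hγ hγπ
  have hcα := cos_bounds hα hαπ
  have hcβ := cos_bounds hβ hβπ
  have hcγ := cos_bounds hγ hγπ
  set a : E3 := v3 r 0 0 with ha_def
  set b : E3 := v3 (r * Real.cos γ) (r * Real.sin γ) 0 with hb_def
  set c : E3 := v3 (r * Real.cos β) (r * Real.sin β * Real.cos t)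
    (r * Real.sin β * Real.sin t) with hc_def
  have hr2 : (r:ℝ) ^ 2 ≠ 0 := pow_ne_zero 2 hr.ne'
  have iaa : (inner ℝ a a : ℝ) = r ^ 2 := by rw [ha_def, inner_v3]; ring
  have ibb : (inner ℝ b b : ℝ) = r ^ 2 := by
    rw [hb_def, inner_v3]
    linear_combination r ^ 2 * Real.sin_sq_add_cos_sq γ
  have icc : (inner ℝ c c : ℝ) = r ^ 2 := by
    rw [hc_def, inner_v3]
    linear_combination (r ^ 2 * Real.sin β ^ 2) * Real.sin_sq_add_cos_sq t
      + r ^ 2 * Real.sin_sq_add_cos_sq β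
  have iab : (inner ℝ a b : ℝ) = r ^ 2 * Real.cos γ := by rw [ha_def, hb_def, inner_v3]; ring
  have iac : (inner ℝ a c : ℝ) = r ^ 2 * Real.cos β := by rw [ha_def, hc_def, inner_v3]; ring
  have hmul : Real.sin β * Real.sin γ * Real.cos t = Real.cos α - Real.cos β * Real.cos γ := by
    rw [hcost, hX_def]
    field_simp
  have ibc : (inner ℝ b c : ℝ) = r ^ 2 * Real.cos α := by
    rw [hb_def, hc_def, inner_v3]
    linear_combination (r ^ 2) * hmul
  have ha' : ‖a‖ = r := norm_eq_of_inner hr.le iaa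
  have hb' : ‖b‖ = r := norm_eq_of_inner hr.le ibb
  have hc' : ‖c‖ = r := norm_eq_of_inner hr.le icc
  have hr2pos : (0:ℝ) < r ^ 2 := by positivity
  refine ⟨a, b, c, ⟨ha', hb', hc', ?_, ?_, ?_, ?_, ?_, ?_, ?_⟩, ?_, ?_, ?_⟩
  · intro h; rw [h, ibb] at iab
    linarith [mul_pos hr2pos (sub_pos.2 hcγ.2)]
  · intro h; rw [h, icc] at iac
    linarith [mul_pos hr2pos (sub_pos.2 hcβ.2)]
  · intro h; rw [h, icc] at ibc
    linarith [mul_pos hr2pos (sub_pos.2 hcα.2)]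
  · intro h; rw [h, inner_neg_left, ibb] at iab
    linarith [mul_pos hr2pos (by linarith [hcγ.1] : (0:ℝ) < Real.cos γ + 1)]
  · intro h; rw [h, inner_neg_left, icc] at iac
    linarith [mul_pos hr2pos (by linarith [hcβ.1] : (0:ℝ) < Real.cos β + 1)]
  · intro h; rw [h, inner_neg_left, icc] at ibc
    linarith [mul_pos hr2pos (by linarith [hcα.1] : (0:ℝ) < Real.cos α + 1)]
  · -- linear independence
    refine Fintype.linearIndependent_iff.2 fun g hg => ?_
    have hg' : g 0 • a + g 1 • b + g 2 • c = 0 := by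
      simpa [Fin.sum_univ_three, add_assoc] using hg
    have e2 : (g 0 • a + g 1 • b + g 2 • c) (2 : Fin 3) = (0 : E3) (2 : Fin 3) := by rw [hg']
    have e1 : (g 0 • a + g 1 • b + g 2 • c) (1 : Fin 3) = (0 : E3) (1 : Fin 3) := by rw [hg']
    have e0 : (g 0 • a + g 1 • b + g 2 • c) (0 : Fin 3) = (0 : E3) (0 : Fin 3) := by rw [hg']
    simp only [ha_def, hb_def, hc_def, PiLp.add_apply, PiLp.smul_apply, PiLp.zero_apply,
      smul_eq_mul, v3_apply, Matrix.cons_val_zero, Matrix.cons_val_one, Matrix.head_cons,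
      Matrix.cons_val_two, Matrix.tail_cons, mul_zero, add_zero, zero_add] at e0 e1 e2
    have hg2 : g 2 = 0 := by
      rcases mul_eq_zero.1 e2 with h | h
      · exact h
      · exfalso; linarith [mul_pos (mul_pos hr hsβ) hsint, h]
    rw [hg2, zero_mul, add_zero] at e1
    have hg1 : g 1 = 0 := by
      rcases mul_eq_zero.1 e1 with h | h
      · exact h
      · exfalso; linarith [mul_pos hr hsγ, h]
    rw [hg1, hg2, zero_mul, zero_mul, add_zero, add_zero] at e0
    have hg0 : g 0 = 0 := by
      rcases mul_eq_zero.1 e0 with h | h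
      · exact h
      · exact absurd h hr.ne'
    intro i; fin_cases i <;> assumption
  · rw [sdist, ibc, mul_div_cancel_left₀ _ hr2, Real.arccos_cos hα.le hαπ.le, hα_def,
      mul_div_cancel₀ _ hr.ne']
  · rw [sdist, iac, mul_div_cancel_left₀ _ hr2, Real.arccos_cos hβ.le hβπ.le, hβ_def,
      mul_div_cancel₀ _ hr.ne']
  · rw [sdist, iab, mul_div_cancel_left₀ _ hr2, Real.arccos_cos hγ.le hγπ.le, hγ_def,
      mul_div_cancel₀ _ hr.ne']

private lemma planar_exists {A B C : ℝ} (hA : 0 < A) (hB : 0 < B) (hC : 0 < C)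
    (hABC : A < B + C) (hBCA : B < A + C) (hCAB : C < A + B) :
    ∃ p q s : E2, ¬ Collinear ℝ ({p, q, s} : Set E2) ∧
      dist q s = A ∧ dist p s = B ∧ dist p q = C := by
  have hpos : (0:ℝ) < 2 * B * C := by positivity
  set Y : ℝ := (B ^ 2 + C ^ 2 - A ^ 2) / (2 * B * C) with hY_def
  have hY1 : -1 < Y := by rw [hY_def, lt_div_iff₀ hpos]; nlinarith
  have hY2 : Y < 1 := by rw [hY_def, div_lt_one hpos]; nlinarith
  set θ : ℝ := Real.arccos Y with hθ_def
  have hcosθ : Real.cos θ = Y := Real.cos_arccos hY1.le hY2.le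
  have hY' : 2 * B * C * Real.cos θ = B ^ 2 + C ^ 2 - A ^ 2 := by
    rw [hcosθ, hY_def]; field_simp
  refine ⟨v2 0 0, v2 C 0, v2 (B * Real.cos θ) (B * Real.sin θ), ?_, ?_, ?_, ?_⟩
  case refine_2 =>
    rw [dist_v2, show (C - B * Real.cos θ) ^ 2 + (0 - B * Real.sin θ) ^ 2 = A ^ 2 by
      linear_combination B ^ 2 * Real.sin_sq_add_cos_sq θ - hY', Real.sqrt_sq hA.le]
  case refine_3 =>
    rw [dist_v2, show (0 - B * Real.cos θ) ^ 2 + (0 - B * Real.sin θ) ^ 2 = B ^ 2 by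
      linear_combination B ^ 2 * Real.sin_sq_add_cos_sq θ, Real.sqrt_sq hB.le]
  case refine_4 =>
    rw [dist_v2, show (0 - C) ^ 2 + ((0:ℝ) - 0) ^ 2 = C ^ 2 by ring, Real.sqrt_sq hC.le]
  case refine_1 =>
    apply noncol hA hB hC hABC hBCA hCAB
    · rw [dist_v2, show (C - B * Real.cos θ) ^ 2 + (0 - B * Real.sin θ) ^ 2 = A ^ 2 by
        linear_combination B ^ 2 * Real.sin_sq_add_cos_sq θ - hY', Real.sqrt_sq hA.le]
    · rw [dist_v2, show (0 - B * Real.cos θ) ^ 2 + (0 - B * Real.sin θ) ^ 2 = B ^ 2 by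
        linear_combination B ^ 2 * Real.sin_sq_add_cos_sq θ, Real.sqrt_sq hB.le]
    · rw [dist_v2, show (0 - C) ^ 2 + ((0:ℝ) - 0) ^ 2 = C ^ 2 by ring, Real.sqrt_sq hC.le]

open Real in
/-- **Lemma 3**: spherical angles exceed planar angles.  Let `A, B, C > 0` satisfy the
strict triangle inequality, each be less than `π r`, and `A + B + C < 2 π r`; then there
exist both a geodesic triangle on the sphere `S_r` and a planar triangle with side
lengths `A, B, C`, and each angle of any such spherical triangle is strictly greater
than the angle of any such planar triangle opposite the side of the same length.
(Equivalently: drawing a planar triangle on a sphere with the same side lengths strictly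
increases all three angles, and drawing a spherical triangle in the plane strictly
decreases them.) -/
theorem spherical_angles_gt_planar_angles (r A B C : ℝ) (hr : 0 < r)
    (hA : 0 < A) (hB : 0 < B) (hC : 0 < C)
    (hABC : A < B + C) (hBCA : B < A + C) (hCAB : C < A + B)
    (hAr : A < π * r) (hBr : B < π * r) (hCr : C < π * r)
    (hsum : A + B + C < 2 * π * r) :
    (∃ a b c : E3, SphTriangle r a b c ∧
      sdist r b c = A ∧ sdist r a c = B ∧ sdist r a b = C) ∧
    (∃ p q s : E2, ¬ Collinear ℝ ({p, q, s} : Set E2) ∧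
      dist q s = A ∧ dist p s = B ∧ dist p q = C) ∧
    (∀ (a b c : E3) (p q s : E2),
      SphTriangle r a b c →
      sdist r b c = A → sdist r a c = B → sdist r a b = C →
      dist q s = A → dist p s = B → dist p q = C →
      sAngle b a c > EuclideanGeometry.angle q p s ∧
      sAngle a b c > EuclideanGeometry.angle p q s ∧
      sAngle a c b > EuclideanGeometry.angle p s q) := by
  refine ⟨sph_exists hr hA hB hC hABC hBCA hCAB hAr hBr hCr hsum,
    planar_exists hA hB hC hABC hBCA hCAB, ?_⟩
  intro a b c p q s hsph hbc hac hab hqs hps hpq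
  obtain ⟨ha, hb, hc, -, -, -, -, -, -, -⟩ := hsph
  refine ⟨?_, ?_, ?_⟩
  · exact main_aux hr hA hB hC hABC hBCA hCAB hAr hBr hCr hsum ha hb hc hbc hac hab hqs hps hpq
  · exact main_aux hr hB hA hC hBCA hABC (by linarith) hBr hAr hCr (by linarith) hb ha hc hac hbc
      (by rw [sdist_comm]; exact hab) hps hqs (by rw [dist_comm]; exact hpq)
  · exact main_aux hr hC hA hB hCAB (by linarith) (by linarith) hCr hAr hBr (by linarith) hc ha hb
      hab (by rw [sdist_comm]; exact hbc) (by rw [sdist_comm]; exact hac) hpq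
      (by rw [dist_comm]; exact hqs) (by rw [dist_comm]; exact hps)
end
end

section
/- For all radii 0 < r < r′ there exists ε > 0 with the following property: if T is a geodesic triangle on the sphere S_r whose angle θ₁ at a vertex a satisfies θ₁ < ε, and T′ is a geodesic triangle on the larger sphere S_{r′} with the same three side lengths as T, then the angle θ₁′ of T′ at the vertex corresponding to a satisfies θ₁′ < θ₁. -/
noncomputable section

open Real

/-! ### Auxiliary analytic lemmas -/

private lemma key_g_deriv (t : ℝ) (x : ℝ) :
    HasDerivAt (fun x => t * Real.cos (t*x) * Real.sin x - Real.sin (t*x) * Real.cos x)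
      ((1 - t^2) * (Real.sin (t*x) * Real.sin x)) x := by
  have h1 : HasDerivAt (fun x : ℝ => Real.cos (t*x)) (-Real.sin (t*x) * t) x := by
    simpa [Function.comp_def] using (Real.hasDerivAt_cos (t*x)).comp x ((hasDerivAt_id x).const_mul t)
  have h2 : HasDerivAt (fun x : ℝ => Real.sin (t*x)) (Real.cos (t*x) * t) x := by
    simpa [Function.comp_def] using (Real.hasDerivAt_sin (t*x)).comp x ((hasDerivAt_id x).const_mul t)
  have h3 := ((h1.const_mul t).mul (Real.hasDerivAt_sin x)).sub
    (h2.mul (Real.hasDerivAt_cos x))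
  exact h3.congr_deriv (by ring)

private lemma key_g_pos {t x : ℝ} (ht0 : 0 < t) (ht1 : t < 1) (hx0 : 0 < x) (hxpi : x < π) :
    0 < t * Real.cos (t*x) * Real.sin x - Real.sin (t*x) * Real.cos x := by
  set g : ℝ → ℝ := fun x => t * Real.cos (t*x) * Real.sin x - Real.sin (t*x) * Real.cos x with hg
  have hmono : StrictMonoOn g (Set.Icc 0 π) := by
    apply strictMonoOn_of_deriv_pos (convex_Icc 0 π)
    · fun_prop
    · intro y hy
      rw [interior_Icc] at hy
      rw [(key_g_deriv t y).deriv]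
      have h1 : 0 < Real.sin y := Real.sin_pos_of_pos_of_lt_pi hy.1 hy.2
      have h2 : 0 < Real.sin (t*y) := Real.sin_pos_of_pos_of_lt_pi (mul_pos ht0 hy.1)
        (by nlinarith [hy.2, Real.pi_pos])
      have h3 : 0 < 1 - t^2 := by nlinarith
      exact mul_pos h3 (mul_pos h2 h1)
  have h0 : g 0 = 0 := by simp [hg]
  have := hmono (Set.mem_Icc.mpr ⟨le_refl 0, Real.pi_pos.le⟩)
    (Set.mem_Icc.mpr ⟨hx0.le, hxpi.le⟩) hx0
  rw [h0] at this
  exact this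

/-- Monotonicity of `x ↦ sin(tx)/sin(x)`: the crucial comparison inequality. -/
private lemma key_sin_ratio {t u w : ℝ} (ht0 : 0 < t) (ht1 : t < 1)
    (hu : 0 < u) (huw : u < w) (hw : w < π) :
    Real.sin (t * u) * Real.sin w < Real.sin u * Real.sin (t * w) := by
  have hupi : u < π := huw.trans hw
  have hsinu : 0 < Real.sin u := Real.sin_pos_of_pos_of_lt_pi hu hupi
  have hsinw : 0 < Real.sin w := Real.sin_pos_of_pos_of_lt_pi (hu.trans huw) hw
  set h : ℝ → ℝ := fun x => Real.sin (t*x) / Real.sin x with hh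
  have hmono : StrictMonoOn h (Set.Icc u w) := by
    apply strictMonoOn_of_deriv_pos (convex_Icc u w)
    · apply ContinuousOn.div (by fun_prop) (by fun_prop)
      intro y hy
      exact (Real.sin_pos_of_pos_of_lt_pi (lt_of_lt_of_le hu hy.1)
        (lt_of_le_of_lt hy.2 hw)).ne'
    · intro y hy
      rw [interior_Icc] at hy
      have hy0 : 0 < y := hu.trans hy.1
      have hypi : y < π := hy.2.trans hw
      have hsiny : 0 < Real.sin y := Real.sin_pos_of_pos_of_lt_pi hy0 hypi
      have h2 : HasDerivAt (fun x : ℝ => Real.sin (t*x)) (Real.cos (t*y) * t) y := by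
        simpa [Function.comp_def] using (Real.hasDerivAt_sin (t*y)).comp y ((hasDerivAt_id y).const_mul t)
      have hd := h2.div (Real.hasDerivAt_sin y) hsiny.ne'
      rw [show deriv h y = _ from hd.deriv]
      apply div_pos _ (by positivity)
      have := key_g_pos ht0 ht1 hy0 hypi
      nlinarith
  have := hmono (Set.mem_Icc.mpr ⟨le_refl u, huw.le⟩) (Set.mem_Icc.mpr ⟨huw.le, le_refl w⟩) huw
  rw [hh] at this
  simp only [div_lt_div_iff₀ hsinu hsinw] at this
  linarith

/-! ### Inner product computations for spherical triangles -/

private lemma inner_lt_one {r : ℝ} (hr : 0 < r) {a b : E3}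
    (ha : ‖a‖ = r) (hb : ‖b‖ = r) (hab : a ≠ b) : (inner ℝ a b : ℝ) / r ^ 2 < 1 := by
  have h : 0 < ‖a - b‖ ^ 2 := by
    have h0 : 0 < ‖a - b‖ := norm_pos_iff.mpr (sub_ne_zero_of_ne hab)
    positivity
  rw [norm_sub_sq_real, ha, hb] at h
  rw [div_lt_one (by positivity)]
  nlinarith

private lemma neg_one_lt_inner {r : ℝ} (hr : 0 < r) {a b : E3}
    (ha : ‖a‖ = r) (hb : ‖b‖ = r) (hab : a ≠ -b) : -1 < (inner ℝ a b : ℝ) / r ^ 2 := by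
  have h : 0 < ‖a + b‖ ^ 2 := by
    have h0 : 0 < ‖a + b‖ := norm_pos_iff.mpr (by
      intro h; apply hab; rw [eq_neg_iff_add_eq_zero]; exact h)
    positivity
  rw [norm_add_sq_real, ha, hb] at h
  rw [lt_div_iff₀ (by positivity)]
  nlinarith

private lemma inner_sTangent_eq {a : E3} (ha : ‖a‖ ≠ 0) (b c : E3) :
    (inner ℝ (sTangent a b) (sTangent a c) : ℝ)
      = (inner ℝ b c : ℝ) - (inner ℝ a b : ℝ) * (inner ℝ a c : ℝ) / ‖a‖ ^ 2 := by
  simp only [sTangent, inner_sub_left, inner_sub_right, real_inner_smul_left,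
    real_inner_smul_right, real_inner_self_eq_norm_sq]
  rw [real_inner_comm b a, real_inner_comm c a]
  field_simp
  ring

private lemma norm_sTangent_eq {r : ℝ} (hr : 0 < r) {a b : E3} (ha : ‖a‖ = r) (hb : ‖b‖ = r) :
    ‖sTangent a b‖ = r * Real.sqrt (1 - ((inner ℝ a b : ℝ) / r ^ 2) ^ 2) := by
  have ha0 : ‖a‖ ≠ 0 := by rw [ha]; exact hr.ne'
  have h1 : (inner ℝ (sTangent a b) (sTangent a b) : ℝ)
      = r ^ 2 * (1 - ((inner ℝ a b : ℝ) / r ^ 2) ^ 2) := by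
    rw [inner_sTangent_eq ha0, real_inner_self_eq_norm_sq, ha, hb]
    field_simp
  have h2 : ‖sTangent a b‖ = Real.sqrt (inner ℝ (sTangent a b) (sTangent a b) : ℝ) := by
    rw [real_inner_self_eq_norm_sq, Real.sqrt_sq (norm_nonneg _)]
  rw [h2, h1, Real.sqrt_mul (by positivity), Real.sqrt_sq hr.le]

private lemma cos_sAngle_formula {r : ℝ} (hr : 0 < r) {a b c : E3}
    (ha : ‖a‖ = r) (hb : ‖b‖ = r) (hc : ‖c‖ = r) :
    Real.cos (sAngle b a c)
      = ((inner ℝ b c : ℝ) / r ^ 2 - ((inner ℝ a b : ℝ) / r ^ 2) * ((inner ℝ a c : ℝ) / r ^ 2))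
        / (Real.sqrt (1 - ((inner ℝ a b : ℝ) / r ^ 2) ^ 2)
            * Real.sqrt (1 - ((inner ℝ a c : ℝ) / r ^ 2) ^ 2)) := by
  have ha0 : ‖a‖ ≠ 0 := by rw [ha]; exact hr.ne'
  rw [sAngle, InnerProductGeometry.cos_angle, inner_sTangent_eq ha0,
    norm_sTangent_eq hr ha hb, norm_sTangent_eq hr ha hc, ha]
  rw [show ∀ s1 s2 : ℝ, r * s1 * (r * s2) = r^2 * (s1 * s2) from fun _ _ => by ring,
    ← div_div]
  congr 1
  ring

/-! ### Linear independence gives the strict triangle inequality -/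

private lemma not_combo {a b c : E3} (h : LinearIndependent ℝ ![a, b, c]) (p q : ℝ) :
    c ≠ p • a + q • b := by
  intro heq
  have h2 := Fintype.linearIndependent_iff.mp h ![p, q, -1] (by
    simp [Fin.sum_univ_three, heq]
    abel)
  simpa using h2 2

private lemma gram_strict {a b c : E3} (hLI : LinearIndependent ℝ ![a, b, c])
    (hu : ‖sTangent a b‖ ≠ 0) :
    (inner ℝ (sTangent a b) (sTangent a c) : ℝ) ^ 2
      < (‖sTangent a b‖ * ‖sTangent a c‖) ^ 2 := by
  set u := sTangent a b with hu'
  set v := sTangent a c with hv'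
  have hcomb : ∀ k : ℝ, v ≠ k • u := by
    intro k hk
    have h2 : c - ((inner ℝ c a : ℝ) / ‖a‖ ^ 2) • a
        = k • (b - ((inner ℝ b a : ℝ) / ‖a‖ ^ 2) • a) := hk
    exact not_combo hLI ((inner ℝ c a : ℝ) / ‖a‖ ^ 2 - k * ((inner ℝ b a : ℝ) / ‖a‖ ^ 2)) k
      (by linear_combination (norm := module) h2)
  have h1 : (inner ℝ u v : ℝ) < ‖u‖ * ‖v‖ := by
    rw [inner_lt_norm_mul_iff_real]
    intro heq
    apply hcomb (‖v‖ / ‖u‖)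
    calc v = ‖u‖⁻¹ • (‖u‖ • v) := by rw [smul_smul, inv_mul_cancel₀ hu, one_smul]
      _ = ‖u‖⁻¹ • (‖v‖ • u) := by rw [heq]
      _ = (‖v‖ / ‖u‖) • u := by rw [smul_smul, div_eq_inv_mul]
  have h2 : -(inner ℝ u v : ℝ) < ‖u‖ * ‖v‖ := by
    have := inner_lt_norm_mul_iff_real (x := u) (y := -v)
    rw [inner_neg_right, norm_neg] at this
    rw [this]
    intro heq
    apply hcomb (-(‖v‖ / ‖u‖))
    rw [smul_neg] at heq
    calc v = ‖u‖⁻¹ • (‖u‖ • v) := by rw [smul_smul, inv_mul_cancel₀ hu, one_smul]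
      _ = ‖u‖⁻¹ • -(‖v‖ • u) := by rw [heq, neg_neg]
      _ = (-(‖v‖ / ‖u‖)) • u := by
            rw [smul_neg, smul_smul, ← neg_smul, div_eq_inv_mul]
  exact sq_lt_sq' (by linarith) h1

/-! ### Trigonometric identities -/

private lemma one_sub_cos_formula (α β γ : ℝ) (hβ : Real.sin β ≠ 0) (hγ : Real.sin γ ≠ 0) :
    1 - (Real.cos α - Real.cos β * Real.cos γ) / (Real.sin β * Real.sin γ)
      = 2 * Real.sin ((α - β + γ)/2) * Real.sin ((α + β - γ)/2)
          / (Real.sin β * Real.sin γ) := by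
  have h1 : Real.cos (β - γ) - Real.cos α
      = 2 * Real.sin ((α - β + γ)/2) * Real.sin ((α + β - γ)/2) := by
    rw [Real.cos_sub_cos, show (β - γ + α)/2 = (α + β - γ)/2 by ring,
      show (β - γ - α)/2 = -((α - β + γ)/2) by ring, Real.sin_neg]
    ring
  have h2 := Real.cos_sub β γ
  rw [eq_div_iff (mul_ne_zero hβ hγ), sub_mul, one_mul,
    div_mul_cancel₀ _ (mul_ne_zero hβ hγ)]
  linarith

private lemma lt_of_cos_lt_cos {p q : ℝ} (hp0 : 0 ≤ p) (hpπ : p ≤ π) (hq0 : 0 ≤ q)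
    (hqπ : q ≤ π) (h : Real.cos p < Real.cos q) : q < p := by
  by_contra hc
  push_neg at hc
  rcases eq_or_lt_of_le hc with h1 | h1
  · rw [h1] at h; exact lt_irrefl _ h
  · exact absurd (Real.strictAntiOn_cos ⟨hp0, hpπ⟩ ⟨hq0, hqπ⟩ h1) (by linarith)


private lemma sq_lt_bounds {A S : ℝ} (h : A ^ 2 < S ^ 2) (hS : 0 < S) :
    -S < A ∧ A < S := by
  constructor <;> nlinarith

private lemma prod_div_lt {a b c d A B C D : ℝ} (h1 : A * c < a * C) (h2 : B * d < b * D)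
    (hA : 0 < A) (hB : 0 < B) (hc : 0 < c) (hd : 0 < d) (hC : 0 < C) (hD : 0 < D)
    (ha : 0 < a) (hb : 0 < b) :
    2 * A * B / (D * C) < 2 * a * b / (d * c) := by
  rw [div_lt_div_iff₀ (by positivity) (by positivity)]
  nlinarith [mul_lt_mul'' h1 h2 (by positivity : (0:ℝ) ≤ A * c) (by positivity : (0:ℝ) ≤ B * d)]

set_option maxHeartbeats 2000000 in
/-- **The thin-triangle lemma** (Lemma 5).  For all radii `0 < r < r'` there is an
`ε > 0` such that: if `T = △abc` is a geodesic triangle on the sphere `S_r` whose apex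
angle at `a` is less than `ε`, and `T' = △a'b'c'` is a geodesic triangle on the larger
sphere `S_{r'}` with the same three side lengths (sides corresponding to sides of equal
length), then the angle of `T'` at `a'` is strictly smaller than the angle of `T`
at `a`. -/
theorem thin_triangle_apex_angle_shrinks (r r' : ℝ) (hr : 0 < r) (hrr' : r < r') :
    ∃ ε > 0, ∀ a b c a' b' c' : E3,
      SphTriangle r a b c → SphTriangle r' a' b' c' →
      sdist r b c = sdist r' b' c' →
      sdist r a b = sdist r' a' b' →
      sdist r a c = sdist r' a' c' →
      sAngle b a c < ε →
      sAngle b' a' c' < sAngle b a c := by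
  have hr' : 0 < r' := hr.trans hrr'
  refine ⟨1, one_pos, fun a b c a' b' c' hT hT' heqbc heqab heqac _ => ?_⟩
  obtain ⟨ha, hb, hc, hab, hac, hbc, habn, hacn, hbcn, hLI⟩ := hT
  obtain ⟨ha', hb', hc', hab', hac', hbc', habn', hacn', hbcn', hLI'⟩ := hT'
  replace ha : ‖a‖ = r := ha
  replace hb : ‖b‖ = r := hb
  replace hc : ‖c‖ = r := hc
  replace ha' : ‖a'‖ = r' := ha'
  replace hb' : ‖b'‖ = r' := hb'
  replace hc' : ‖c'‖ = r' := hc'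
  set t := r / r' with htdef
  have ht0 : 0 < t := div_pos hr hr'
  have ht1 : t < 1 := (div_lt_one hr').mpr hrr'
  simp only [sdist] at heqbc heqab heqac
  set x := (inner ℝ a b : ℝ) / r ^ 2 with hxdef
  set y := (inner ℝ a c : ℝ) / r ^ 2 with hydef
  set z := (inner ℝ b c : ℝ) / r ^ 2 with hzdef
  set x' := (inner ℝ a' b' : ℝ) / r' ^ 2 with hxdef'
  set y' := (inner ℝ a' c' : ℝ) / r' ^ 2 with hydef'
  set z' := (inner ℝ b' c' : ℝ) / r' ^ 2 with hzdef'
  have hx1 : x < 1 := inner_lt_one hr ha hb hab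
  have hx2 : -1 < x := neg_one_lt_inner hr ha hb habn
  have hy1 : y < 1 := inner_lt_one hr ha hc hac
  have hy2 : -1 < y := neg_one_lt_inner hr ha hc hacn
  have hz1 : z < 1 := inner_lt_one hr hb hc hbc
  have hz2 : -1 < z := neg_one_lt_inner hr hb hc hbcn
  have hx1' : x' < 1 := inner_lt_one hr' ha' hb' hab'
  have hx2' : -1 < x' := neg_one_lt_inner hr' ha' hb' habn'
  have hy1' : y' < 1 := inner_lt_one hr' ha' hc' hac'
  have hy2' : -1 < y' := neg_one_lt_inner hr' ha' hc' hacn'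
  have hz1' : z' < 1 := inner_lt_one hr' hb' hc' hbc'
  have hz2' : -1 < z' := neg_one_lt_inner hr' hb' hc' hbcn'
  set β := Real.arccos x with hβdef
  set γ := Real.arccos y with hγdef
  set α := Real.arccos z with hαdef
  set β' := Real.arccos x' with hβdef'
  set γ' := Real.arccos y' with hγdef'
  set α' := Real.arccos z' with hαdef'
  have hβ0 : 0 < β := Real.arccos_pos.mpr hx1
  have hγ0 : 0 < γ := Real.arccos_pos.mpr hy1
  have hα0 : 0 < α := Real.arccos_pos.mpr hz1
  have hβπ : β < π := lt_of_le_of_ne (Real.arccos_le_pi x)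
    (fun h => absurd (Real.arccos_eq_pi.mp h) (by linarith))
  have hγπ : γ < π := lt_of_le_of_ne (Real.arccos_le_pi y)
    (fun h => absurd (Real.arccos_eq_pi.mp h) (by linarith))
  have hαπ : α < π := lt_of_le_of_ne (Real.arccos_le_pi z)
    (fun h => absurd (Real.arccos_eq_pi.mp h) (by linarith))
  -- side length equalities give the scaled angles
  have hβ't : β' = t * β := by
    rw [htdef, div_mul_eq_mul_div, eq_div_iff hr'.ne']
    linarith [heqab]
  have hγ't : γ' = t * γ := by
    rw [htdef, div_mul_eq_mul_div, eq_div_iff hr'.ne']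
    linarith [heqac]
  have hα't : α' = t * α := by
    rw [htdef, div_mul_eq_mul_div, eq_div_iff hr'.ne']
    linarith [heqbc]
  -- trig values
  have hcosβ : Real.cos β = x := Real.cos_arccos hx2.le hx1.le
  have hcosγ : Real.cos γ = y := Real.cos_arccos hy2.le hy1.le
  have hcosα : Real.cos α = z := Real.cos_arccos hz2.le hz1.le
  have hcosβ' : Real.cos β' = x' := Real.cos_arccos hx2'.le hx1'.le
  have hcosγ' : Real.cos γ' = y' := Real.cos_arccos hy2'.le hy1'.le
  have hcosα' : Real.cos α' = z' := Real.cos_arccos hz2'.le hz1'.le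
  have hsinβ : Real.sin β = Real.sqrt (1 - x ^ 2) := Real.sin_arccos x
  have hsinγ : Real.sin γ = Real.sqrt (1 - y ^ 2) := Real.sin_arccos y
  have hsinβ' : Real.sin β' = Real.sqrt (1 - x' ^ 2) := Real.sin_arccos x'
  have hsinγ' : Real.sin γ' = Real.sqrt (1 - y' ^ 2) := Real.sin_arccos y'
  have hsβ : 0 < Real.sin β := Real.sin_pos_of_pos_of_lt_pi hβ0 hβπ
  have hsγ : 0 < Real.sin γ := Real.sin_pos_of_pos_of_lt_pi hγ0 hγπ
  have hstβ : 0 < Real.sin (t * β) := Real.sin_pos_of_pos_of_lt_pi (mul_pos ht0 hβ0)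
    ((mul_lt_of_lt_one_left hβ0 ht1).trans hβπ)
  have hstγ : 0 < Real.sin (t * γ) := Real.sin_pos_of_pos_of_lt_pi (mul_pos ht0 hγ0)
    ((mul_lt_of_lt_one_left hγ0 ht1).trans hγπ)
  -- cosine of the apex angles
  have hcA : Real.cos (sAngle b a c)
      = (Real.cos α - Real.cos β * Real.cos γ) / (Real.sin β * Real.sin γ) := by
    rw [cos_sAngle_formula hr ha hb hc, hcosα, hcosβ, hcosγ, hsinβ, hsinγ,
      hxdef, hydef, hzdef]
  have hcA'0 : Real.cos (sAngle b' a' c')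
      = (Real.cos α' - Real.cos β' * Real.cos γ') / (Real.sin β' * Real.sin γ') := by
    rw [cos_sAngle_formula hr' ha' hb' hc', hcosα', hcosβ', hcosγ', hsinβ', hsinγ',
      hxdef', hydef', hzdef']
  have hcA' : Real.cos (sAngle b' a' c')
      = (Real.cos (t*α) - Real.cos (t*β) * Real.cos (t*γ))
          / (Real.sin (t*β) * Real.sin (t*γ)) := by
    rw [hcA'0, hβ't, hγ't, hα't]
  -- strict spherical triangle inequality from linear independence
  have hs1 : 0 < Real.sqrt (1 - x ^ 2) := hsinβ ▸ hsβ
  have hs2 : 0 < Real.sqrt (1 - y ^ 2) := hsinγ ▸ hsγ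
  have hX : (inner ℝ a b : ℝ) = x * r ^ 2 := by
    rw [hxdef, div_mul_cancel₀ _ (pow_ne_zero 2 hr.ne')]
  have hY : (inner ℝ a c : ℝ) = y * r ^ 2 := by
    rw [hydef, div_mul_cancel₀ _ (pow_ne_zero 2 hr.ne')]
  have hZ : (inner ℝ b c : ℝ) = z * r ^ 2 := by
    rw [hzdef, div_mul_cancel₀ _ (pow_ne_zero 2 hr.ne')]
  have hG := gram_strict hLI (by
    rw [norm_sTangent_eq hr ha hb, ← hxdef]
    exact (mul_pos hr hs1).ne')
  rw [inner_sTangent_eq (by rw [ha]; exact hr.ne'), norm_sTangent_eq hr ha hb,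
    norm_sTangent_eq hr ha hc, ha, ← hxdef, ← hydef, hX, hY, hZ] at hG
  have hrw1 : (z * r ^ 2 - x * r ^ 2 * (y * r ^ 2) / r ^ 2) ^ 2
      = (z - x * y) ^ 2 * r ^ 4 := by
    field_simp
  have hrw2 : (r * Real.sqrt (1 - x ^ 2) * (r * Real.sqrt (1 - y ^ 2))) ^ 2
      = (Real.sqrt (1 - x ^ 2) * Real.sqrt (1 - y ^ 2)) ^ 2 * r ^ 4 := by ring
  rw [hrw1, hrw2] at hG
  have htri : (z - x * y) ^ 2 < (Real.sqrt (1 - x ^ 2) * Real.sqrt (1 - y ^ 2)) ^ 2 :=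
    lt_of_mul_lt_mul_right hG (show (0:ℝ) ≤ r ^ 4 by positivity)
  have hS : 0 < Real.sqrt (1 - x ^ 2) * Real.sqrt (1 - y ^ 2) := mul_pos hs1 hs2
  have hlt1 : z - x * y < Real.sqrt (1 - x ^ 2) * Real.sqrt (1 - y ^ 2) :=
    (sq_lt_bounds htri hS).2
  have hlt2 : -(Real.sqrt (1 - x ^ 2) * Real.sqrt (1 - y ^ 2)) < z - x * y :=
    (sq_lt_bounds htri hS).1
  -- the strict triangle inequalities for the angles
  have hBG : β - γ < α := by
    rcases le_or_gt (β - γ) 0 with h | h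
    · linarith
    · apply lt_of_cos_lt_cos hα0.le hαπ.le h.le (by linarith)
      rw [Real.cos_sub, hcosα, hcosβ, hcosγ, hsinβ, hsinγ]
      linarith
  have hGB : γ - β < α := by
    rcases le_or_gt (γ - β) 0 with h | h
    · linarith
    · apply lt_of_cos_lt_cos hα0.le hαπ.le h.le (by linarith)
      rw [show γ - β = -(β - γ) by ring, Real.cos_neg, Real.cos_sub, hcosα, hcosβ,
        hcosγ, hsinβ, hsinγ]
      linarith
  have hABG : α < β + γ := by
    rcases le_or_gt (β + γ) π with h | h
    · apply lt_of_cos_lt_cos (by linarith) h hα0.le hαπ.le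
      rw [Real.cos_add, hcosα, hcosβ, hcosγ, hsinβ, hsinγ]
      linarith
    · linarith
  -- the half-angle quantities
  set u := (α - β + γ) / 2 with hudef
  set v := (α + β - γ) / 2 with hvdef
  have hu0 : 0 < u := by rw [hudef]; linarith
  have huγ : u < γ := by rw [hudef]; linarith
  have hv0 : 0 < v := by rw [hvdef]; linarith
  have hvβ : v < β := by rw [hvdef]; linarith
  have k1 := key_sin_ratio ht0 ht1 hu0 huγ hγπ
  have k2 := key_sin_ratio ht0 ht1 hv0 hvβ hβπ
  have hsu : 0 < Real.sin u := Real.sin_pos_of_pos_of_lt_pi hu0 (by linarith)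
  have hsv : 0 < Real.sin v := Real.sin_pos_of_pos_of_lt_pi hv0 (by linarith)
  have hstu : 0 < Real.sin (t * u) := Real.sin_pos_of_pos_of_lt_pi (mul_pos ht0 hu0)
    ((mul_lt_of_lt_one_left hu0 ht1).trans (huγ.trans hγπ))
  have hstv : 0 < Real.sin (t * v) := Real.sin_pos_of_pos_of_lt_pi (mul_pos ht0 hv0)
    ((mul_lt_of_lt_one_left hv0 ht1).trans (hvβ.trans hβπ))
  have hstu' : 0 < Real.sin (t * γ) := hstγ
  have f1 : 1 - Real.cos (sAngle b a c)
      = 2 * Real.sin u * Real.sin v / (Real.sin β * Real.sin γ) := by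
    rw [hcA, one_sub_cos_formula α β γ hsβ.ne' hsγ.ne', ← hudef, ← hvdef]
  have f2 : 1 - Real.cos (sAngle b' a' c')
      = 2 * Real.sin (t * u) * Real.sin (t * v) / (Real.sin (t * β) * Real.sin (t * γ)) := by
    rw [hcA', one_sub_cos_formula _ _ _ hstβ.ne' hstγ.ne',
      show (t * α - t * β + t * γ) / 2 = t * u by rw [hudef]; ring,
      show (t * α + t * β - t * γ) / 2 = t * v by rw [hvdef]; ring]
  have hmain := prod_div_lt k1 k2 hstu hstv hsγ hsβ hstγ hstβ hsu hsv
  have hcos : Real.cos (sAngle b a c) < Real.cos (sAngle b' a' c') := by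
    rw [← f1, ← f2] at hmain
    linarith [hmain]
  exact lt_of_cos_lt_cos (InnerProductGeometry.angle_nonneg _ _)
    (InnerProductGeometry.angle_le_pi _ _) (InnerProductGeometry.angle_nonneg _ _)
    (InnerProductGeometry.angle_le_pi _ _) hcos
end
end

section
/- Let w₀, w₁, …, w_m be a chain on the sphere S_r, i.e., consecutive points are distinct and non-antipodal and are joined by minimal geodesic arcs, with total length L = Σᵢ d_r(wᵢ₋₁, wᵢ) satisfying L < πr. If the angle at some interior vertex wᵢ (the angle between the arcs wᵢ₋₁wᵢ and wᵢwᵢ₊₁) is strictly less than π, then the endpoints are strictly closer than the total length: d_r(w₀, w_m) < L. -/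
noncomputable section

section Aux

open Real

local notation "⟪" x ", " y "⟫" => @inner ℝ _ _ x y

private lemma aux_abs_inner_le {r : ℝ} {a b : E3} (ha : ‖a‖ = r) (hb : ‖b‖ = r) :
    |(⟪a, b⟫ : ℝ)| ≤ r ^ 2 := by
  have h := abs_real_inner_le_norm a b
  rw [ha, hb] at h
  nlinarith

private lemma aux_abs_div_le {r : ℝ} {a b : E3} (hr : 0 < r) (ha : ‖a‖ = r) (hb : ‖b‖ = r) :
    |(⟪a, b⟫ : ℝ) / r ^ 2| ≤ 1 := by
  have h := aux_abs_inner_le ha hb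
  have hr2 : (0:ℝ) < r ^ 2 := by positivity
  rw [abs_div, abs_of_pos hr2]
  exact div_le_one_of_le₀ h hr2.le

private lemma aux_cos_arccos {r : ℝ} {a b : E3} (hr : 0 < r) (ha : ‖a‖ = r) (hb : ‖b‖ = r) :
    Real.cos (Real.arccos ((⟪a, b⟫ : ℝ) / r ^ 2)) = (⟪a, b⟫ : ℝ) / r ^ 2 := by
  have h := abs_le.mp (aux_abs_div_le hr ha hb)
  exact Real.cos_arccos h.1 h.2

private lemma aux_norm_sq_tangent {r : ℝ} {a b : E3} (hr : 0 < r) (ha : ‖a‖ = r)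
    (hb : ‖b‖ = r) :
    ‖sTangent b a‖ ^ 2 = r ^ 2 - (⟪a, b⟫ : ℝ) ^ 2 / r ^ 2 := by
  have hr2 : (r:ℝ) ^ 2 ≠ 0 := by positivity
  unfold sTangent
  rw [norm_sub_sq_real, real_inner_smul_right, norm_smul, hb, ha]
  rw [mul_pow, Real.norm_eq_abs, sq_abs]
  field_simp
  ring

private lemma aux_norm_tangent {r : ℝ} {a b : E3} (hr : 0 < r) (ha : ‖a‖ = r)
    (hb : ‖b‖ = r) :
    ‖sTangent b a‖ = r * Real.sin (Real.arccos ((⟪a, b⟫ : ℝ) / r ^ 2)) := by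
  have hr2 : (0:ℝ) < r ^ 2 := by positivity
  rw [Real.sin_arccos, ← Real.sqrt_sq (norm_nonneg (sTangent b a)),
    aux_norm_sq_tangent hr ha hb]
  rw [show r ^ 2 - (⟪a, b⟫ : ℝ) ^ 2 / r ^ 2 = r ^ 2 * (1 - ((⟪a, b⟫ : ℝ) / r ^ 2) ^ 2) by
    field_simp]
  rw [Real.sqrt_mul (by positivity), Real.sqrt_sq hr.le]

private lemma aux_inner_tangent {r : ℝ} {a b c : E3} (hb : ‖b‖ = r) :
    (⟪sTangent b a, sTangent b c⟫ : ℝ) = ⟪a, c⟫ - ⟪a, b⟫ * ⟪b, c⟫ / r ^ 2 := by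
  unfold sTangent
  rw [inner_sub_left, inner_sub_right, inner_sub_right, real_inner_smul_left,
    real_inner_smul_left, real_inner_smul_right, real_inner_smul_right, hb,
    real_inner_self_eq_norm_sq, hb]
  rw [real_inner_comm c b]
  by_cases h : r = 0
  · simp [h]
  · field_simp
    ring

/-- Non-strict spherical triangle inequality at the level of arccos. -/
private lemma aux_tri {r : ℝ} {a b c : E3} (hr : 0 < r) (ha : ‖a‖ = r) (hb : ‖b‖ = r)
    (hc : ‖c‖ = r) :
    Real.arccos ((⟪a, c⟫ : ℝ) / r ^ 2) ≤
      Real.arccos ((⟪a, b⟫ : ℝ) / r ^ 2) + Real.arccos ((⟪b, c⟫ : ℝ) / r ^ 2) := by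
  set α := Real.arccos ((⟪a, b⟫ : ℝ) / r ^ 2) with hα
  set β := Real.arccos ((⟪b, c⟫ : ℝ) / r ^ 2) with hβ
  set γ := Real.arccos ((⟪a, c⟫ : ℝ) / r ^ 2) with hγ
  have hγpi : γ ≤ π := Real.arccos_le_pi _
  have hα0 : 0 ≤ α := Real.arccos_nonneg _
  have hβ0 : 0 ≤ β := Real.arccos_nonneg _
  by_cases h : α + β ≤ π
  · have hcs : -(‖sTangent b a‖ * ‖sTangent b c‖) ≤ (⟪sTangent b a, sTangent b c⟫ : ℝ) := by
      have h' := abs_le.mp (abs_real_inner_le_norm (sTangent b a) (sTangent b c))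
      linarith [h'.1]
    rw [aux_inner_tangent hb, aux_norm_tangent hr ha hb, aux_norm_tangent hr hc hb,
      real_inner_comm b c, ← hα, ← hβ] at hcs
    have hcosα : Real.cos α = (⟪a, b⟫ : ℝ) / r ^ 2 := aux_cos_arccos hr ha hb
    have hcosβ : Real.cos β = (⟪b, c⟫ : ℝ) / r ^ 2 := aux_cos_arccos hr hb hc
    have hcosγ : Real.cos γ = (⟪a, c⟫ : ℝ) / r ^ 2 := aux_cos_arccos hr ha hc
    have hr2 : (0:ℝ) < r ^ 2 := by positivity
    have hkey : Real.cos (α + β) ≤ Real.cos γ := by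
      rw [Real.cos_add, hcosα, hcosβ, hcosγ, ← sub_nonneg]
      have expand : (⟪a, c⟫ : ℝ) / r ^ 2 -
          ((⟪a, b⟫ : ℝ) / r ^ 2 * ((⟪b, c⟫ : ℝ) / r ^ 2) - Real.sin α * Real.sin β) =
          (1 / r ^ 2) * (((⟪a, c⟫ : ℝ) - (⟪a, b⟫ : ℝ) * (⟪b, c⟫ : ℝ) / r ^ 2) -
            (-(r * Real.sin α * (r * Real.sin β)))) := by
        field_simp
        ring
      rw [expand]
      exact mul_nonneg (by positivity) (by linarith)
    by_contra hlt
    push_neg at hlt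
    have := Real.strictAntiOn_cos ⟨by linarith, h⟩ ⟨Real.arccos_nonneg _, hγpi⟩ hlt
    linarith
  · push_neg at h
    linarith

private lemma aux_inner_lt {r : ℝ} {a b : E3} (hr : 0 < r) (ha : ‖a‖ = r) (hb : ‖b‖ = r)
    (hne : a ≠ b) (hne' : a ≠ -b) : |(⟪a, b⟫ : ℝ)| < r ^ 2 := by
  rcases lt_or_eq_of_le (aux_abs_inner_le ha hb) with h | h
  · exact h
  · exfalso
    rcases abs_eq (by positivity : (0:ℝ) ≤ r ^ 2) |>.mp h with h1 | h1
    · have : (⟪a, b⟫ : ℝ) = ‖a‖ * ‖b‖ := by rw [ha, hb]; nlinarith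
      have h2 := inner_eq_norm_mul_iff_real.mp this
      rw [ha, hb] at h2
      exact hne (smul_right_injective E3 (ne_of_gt hr) h2)
    · have : (⟪a, -b⟫ : ℝ) = ‖a‖ * ‖-b‖ := by
        rw [inner_neg_right, ha, norm_neg, hb]; nlinarith
      have h2 := inner_eq_norm_mul_iff_real.mp this
      rw [ha, norm_neg, hb] at h2
      exact hne' (smul_right_injective E3 (ne_of_gt hr) h2)

/-- Strict spherical triangle inequality when the angle at `b` is `< π`. -/
private lemma aux_tri_strict {r : ℝ} {a b c : E3} (hr : 0 < r) (ha : ‖a‖ = r) (hb : ‖b‖ = r)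
    (hc : ‖c‖ = r) (hab : a ≠ b) (hab' : a ≠ -b) (hbc : b ≠ c) (hbc' : b ≠ -c)
    (hang : sAngle a b c < π) :
    Real.arccos ((⟪a, c⟫ : ℝ) / r ^ 2) <
      Real.arccos ((⟪a, b⟫ : ℝ) / r ^ 2) + Real.arccos ((⟪b, c⟫ : ℝ) / r ^ 2) := by
  set α := Real.arccos ((⟪a, b⟫ : ℝ) / r ^ 2) with hα
  set β := Real.arccos ((⟪b, c⟫ : ℝ) / r ^ 2) with hβ
  set γ := Real.arccos ((⟪a, c⟫ : ℝ) / r ^ 2) with hγ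
  have hγpi : γ ≤ π := Real.arccos_le_pi _
  have hγ0 : 0 ≤ γ := Real.arccos_nonneg _
  have hα0 : 0 ≤ α := Real.arccos_nonneg _
  have hβ0 : 0 ≤ β := Real.arccos_nonneg _
  have hr2 : (0:ℝ) < r ^ 2 := by positivity
  -- positivity of tangent norms
  have habs1 : |(⟪a, b⟫ : ℝ)| < r ^ 2 := aux_inner_lt hr ha hb hab hab'
  have habs2 : |(⟪b, c⟫ : ℝ)| < r ^ 2 :=
    aux_inner_lt hr hb hc (fun h => hbc h) (fun h => hbc' h)
  have hsinα : 0 < Real.sin α := by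
    rw [hα, Real.sin_arccos]
    apply Real.sqrt_pos.mpr
    have : |(⟪a, b⟫ : ℝ) / r ^ 2| < 1 := by
      rw [abs_div, abs_of_pos hr2]; exact (div_lt_one hr2).mpr habs1
    nlinarith [abs_lt.mp this]
  have hsinβ : 0 < Real.sin β := by
    rw [hβ, Real.sin_arccos]
    apply Real.sqrt_pos.mpr
    have : |(⟪b, c⟫ : ℝ) / r ^ 2| < 1 := by
      rw [abs_div, abs_of_pos hr2]; exact (div_lt_one hr2).mpr habs2
    nlinarith [abs_lt.mp this]
  have hnu : ‖sTangent b a‖ = r * Real.sin α := by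
    rw [aux_norm_tangent hr ha hb, ← hα]
  have hnv : ‖sTangent b c‖ = r * Real.sin β := by
    rw [aux_norm_tangent hr hc hb, real_inner_comm b c, ← hβ]
  have hnu0 : 0 < ‖sTangent b a‖ := by rw [hnu]; positivity
  have hnv0 : 0 < ‖sTangent b c‖ := by rw [hnv]; positivity
  -- the angle θ at b has cos θ > -1
  set θ := sAngle a b c with hθ
  have hθ0 : 0 ≤ θ := InnerProductGeometry.angle_nonneg _ _
  have hcosθ : -1 < Real.cos θ := by
    have := Real.strictAntiOn_cos ⟨hθ0, le_of_lt hang⟩ ⟨Real.pi_pos.le, le_refl π⟩ hang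
    rw [Real.cos_pi] at this
    exact this
  have hinner : (⟪sTangent b a, sTangent b c⟫ : ℝ) =
      Real.cos θ * (‖sTangent b a‖ * ‖sTangent b c‖) :=
    (InnerProductGeometry.cos_angle_mul_norm_mul_norm _ _).symm
  have hcs : -(‖sTangent b a‖ * ‖sTangent b c‖) < (⟪sTangent b a, sTangent b c⟫ : ℝ) := by
    rw [hinner]
    have hpos : 0 < ‖sTangent b a‖ * ‖sTangent b c‖ := mul_pos hnu0 hnv0
    nlinarith
  rw [aux_inner_tangent hb, hnu, hnv] at hcs
  have hcosα : Real.cos α = (⟪a, b⟫ : ℝ) / r ^ 2 := aux_cos_arccos hr ha hb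
  have hcosβ : Real.cos β = (⟪b, c⟫ : ℝ) / r ^ 2 := aux_cos_arccos hr hb hc
  have hcosγ : Real.cos γ = (⟪a, c⟫ : ℝ) / r ^ 2 := aux_cos_arccos hr ha hc
  have hkey : Real.cos (α + β) < Real.cos γ := by
    rw [Real.cos_add, hcosα, hcosβ, hcosγ, ← sub_pos]
    have expand : (⟪a, c⟫ : ℝ) / r ^ 2 -
        ((⟪a, b⟫ : ℝ) / r ^ 2 * ((⟪b, c⟫ : ℝ) / r ^ 2) - Real.sin α * Real.sin β) =
        (1 / r ^ 2) * (((⟪a, c⟫ : ℝ) - (⟪a, b⟫ : ℝ) * (⟪b, c⟫ : ℝ) / r ^ 2) -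
          (-(r * Real.sin α * (r * Real.sin β)))) := by
      field_simp
      ring
    rw [expand]
    exact mul_pos (by positivity) (by linarith)
  by_cases h : α + β ≤ π
  · by_contra hcon
    push_neg at hcon
    have h2 : Real.cos γ ≤ Real.cos (α + β) :=
      Real.cos_le_cos_of_nonneg_of_le_pi (by linarith) hγpi hcon
    linarith
  · push_neg at h
    linarith

private lemma aux_sdist_tri {r : ℝ} {a b c : E3} (hr : 0 < r) (ha : onSphere r a)
    (hb : onSphere r b) (hc : onSphere r c) :
    sdist r a c ≤ sdist r a b + sdist r b c := by
  have h := aux_tri hr ha hb hc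
  unfold sdist
  nlinarith

private lemma aux_sdist_tri_strict {r : ℝ} {a b c : E3} (hr : 0 < r) (ha : onSphere r a)
    (hb : onSphere r b) (hc : onSphere r c) (hab : a ≠ b) (hab' : a ≠ -b) (hbc : b ≠ c)
    (hbc' : b ≠ -c) (hang : sAngle a b c < Real.pi) :
    sdist r a c < sdist r a b + sdist r b c := by
  have h := aux_tri_strict hr ha hb hc hab hab' hbc hbc' hang
  unfold sdist
  nlinarith

private lemma aux_sdist_self {r : ℝ} {p : E3} (hr : 0 < r) (hp : onSphere r p) :
    sdist r p p = 0 := by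
  unfold sdist
  rw [real_inner_self_eq_norm_sq, hp, div_self (by positivity), Real.arccos_one, mul_zero]

end Aux

open Real in
/-- **Strict shortcut for non-straight spherical chains** (used in the proof of
Lemma 6).  Let `w 0, …, w m` be a chain on the sphere `S_r` (consecutive points distinct
and non-antipodal, joined by minimal geodesic arcs) whose total length
`L = Σᵢ d_r(w (i-1), w i)` satisfies `L < π r`.  If the angle at some interior vertex is
strictly less than `π`, then `d_r(w 0, w m) < L`. -/
theorem spherical_chain_strict_shortcut (r : ℝ) (hr : 0 < r) (m : ℕ) (w : ℕ → E3)
    (hsph : ∀ i ≤ m, onSphere r (w i))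
    (hne : ∀ i < m, w i ≠ w (i + 1) ∧ w i ≠ -(w (i + 1)))
    (hL : ∑ i ∈ Finset.range m, sdist r (w i) (w (i + 1)) < π * r)
    (hangle : ∃ i, 0 < i ∧ i < m ∧ sAngle (w (i - 1)) (w i) (w (i + 1)) < π) :
    sdist r (w 0) (w m) < ∑ i ∈ Finset.range m, sdist r (w i) (w (i + 1)) := by
  obtain ⟨i, hi0, him, hang⟩ := hangle
  obtain ⟨j, rfl⟩ : ∃ j, i = j + 1 := ⟨i - 1, (Nat.succ_pred_eq_of_pos hi0).symm⟩
  simp only [Nat.add_sub_cancel] at hang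
  -- non-strict chain bound
  have key : ∀ k, k ≤ m → sdist r (w 0) (w k) ≤
      ∑ j ∈ Finset.range k, sdist r (w j) (w (j + 1)) := by
    intro k
    induction k with
    | zero => intro _; simp [aux_sdist_self hr (hsph 0 (Nat.zero_le m))]
    | succ k ih =>
      intro hk
      rw [Finset.sum_range_succ]
      have h1 := aux_sdist_tri hr (hsph 0 (Nat.zero_le m)) (hsph k (by omega))
        (hsph (k + 1) hk)
      have h2 := ih (by omega)
      linarith
  -- strict from index j+2 onward
  have key2 : ∀ k, k ≤ m → j + 1 < k → sdist r (w 0) (w k) <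
      ∑ j ∈ Finset.range k, sdist r (w j) (w (j + 1)) := by
    intro k
    induction k with
    | zero => omega
    | succ k ih =>
      intro hk hjk
      rcases Nat.lt_or_ge (j + 1) k with h | h
      · rw [Finset.sum_range_succ]
        have h1 := aux_sdist_tri hr (hsph 0 (Nat.zero_le m)) (hsph k (by omega))
          (hsph (k + 1) hk)
        have h2 := ih (by omega) h
        linarith
      · -- k = j + 1 : the strict step
        have hkj : k = j + 1 := by omega
        subst hkj
        have hjm : j < m := by omega
        have hj1m : j + 1 < m := by omega
        have hS1 := hsph j (by omega)
        have hS2 := hsph (j + 1) (by omega)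
        have hS3 := hsph (j + 1 + 1) (by omega)
        have hne1 := hne j hjm
        have hne2 := hne (j + 1) hj1m
        have hstrict : sdist r (w j) (w (j + 1 + 1)) <
            sdist r (w j) (w (j + 1)) + sdist r (w (j + 1)) (w (j + 1 + 1)) := by
          apply aux_sdist_tri_strict hr hS1 hS2 hS3
          · exact hne1.1
          · exact hne1.2
          · exact hne2.1
          · exact hne2.2
          · exact hang
        have htri : sdist r (w 0) (w (j + 1 + 1)) ≤
            sdist r (w 0) (w j) + sdist r (w j) (w (j + 1 + 1)) :=
          aux_sdist_tri hr (hsph 0 (Nat.zero_le m)) hS1 hS3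
        have hpre := key j (by omega)
        rw [Finset.sum_range_succ, Finset.sum_range_succ]
        linarith
  exact key2 m (le_refl m) (by omega)
end
end

section
/- Let T be a triangle in the Euclidean plane with side lengths A, B, C (positive reals satisfying the strict triangle inequality), and let T′ be a geodesic triangle in the hyperbolic plane (the upper half-plane with its Poincaré metric of constant curvature −1) with the same side lengths A, B, C. Then each angle of T′ is strictly smaller than the angle of T opposite the side of the same length. -/
noncomputable section

/-- The hyperbolic angle of a geodesic triangle in the upper half-plane (with its
Poincaré metric of constant curvature `−1`, which is the distance carried by Mathlib's
`MetricSpace UpperHalfPlane` instance) at the vertex `z`, between the geodesic sides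
from `z` to `w` and from `z` to `u`.  It is computed from the side lengths by the
hyperbolic law of cosines, which agrees with the angle between the initial tangent
vectors of the two sides at `z`. -/
def hypAngle (z w u : UpperHalfPlane) : ℝ :=
  Real.arccos ((Real.cosh (dist z w) * Real.cosh (dist z u) - Real.cosh (dist w u)) /
    (Real.sinh (dist z w) * Real.sinh (dist z u)))

/-- A geodesic triangle in the hyperbolic plane: three points, pairwise distinct and not
all on a common geodesic; in the hyperbolic plane this is equivalent to the three
pairwise distances satisfying the strict triangle inequality. -/
def HypTriangle (z w u : UpperHalfPlane) : Prop :=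
  dist w u < dist z w + dist z u ∧
  dist z u < dist z w + dist w u ∧
  dist z w < dist z u + dist w u

/-- `sinh y < y * cosh y` for `y > 0`. -/
lemma sinh_lt_mul_cosh {y : ℝ} (hy : 0 < y) : Real.sinh y < y * Real.cosh y := by
  have hmono : StrictMonoOn (fun x : ℝ => x * Real.cosh x - Real.sinh x) (Set.Ici 0) := by
    apply strictMonoOn_of_deriv_pos (convex_Ici 0)
    · fun_prop
    · intro x hx
      rw [interior_Ici] at hx
      have hd : HasDerivAt (fun x : ℝ => x * Real.cosh x - Real.sinh x)
          (1 * Real.cosh x + x * Real.sinh x - Real.cosh x) x :=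
        ((hasDerivAt_id x).mul (Real.hasDerivAt_cosh x)).sub (Real.hasDerivAt_sinh x)
      rw [hd.deriv]
      have hs := Real.sinh_pos_iff.2 hx
      nlinarith [mul_pos hx hs]
  have := hmono (Set.self_mem_Ici) (Set.mem_Ici.2 hy.le) hy
  simpa using this

/-- `t ↦ cosh √t` is strictly convex on `[0, ∞)`. -/
lemma strictConvexOn_cosh_sqrt :
    StrictConvexOn ℝ (Set.Ici 0) (fun t : ℝ => Real.cosh (Real.sqrt t)) := by
  apply strictConvexOn_of_deriv2_pos (convex_Ici 0)
  · exact (Real.continuous_cosh.comp Real.continuous_sqrt).continuousOn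
  · intro x hx
    rw [interior_Ici] at hx
    set f : ℝ → ℝ := fun t => Real.cosh (Real.sqrt t) with hf
    set g : ℝ → ℝ := fun t => Real.sinh (Real.sqrt t) * (2 * Real.sqrt t)⁻¹ with hgdef
    have hderiv : ∀ t ∈ Set.Ioi (0:ℝ), deriv f t = g t := by
      intro t ht
      have ht' : (t:ℝ) ≠ 0 := (Set.mem_Ioi.1 ht).ne'
      have h1 : HasDerivAt f (Real.sinh (Real.sqrt t) * (1 / (2 * Real.sqrt t))) t :=
        (Real.hasDerivAt_cosh (Real.sqrt t)).comp t (Real.hasDerivAt_sqrt ht')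
      rw [h1.deriv, hgdef, one_div]
    have hx' : (x:ℝ) ≠ 0 := hx.ne'
    have hsq : 0 < Real.sqrt x := Real.sqrt_pos.2 hx
    have h2sq : (2 * Real.sqrt x) ≠ 0 := by positivity
    have hgd : HasDerivAt g
        (Real.cosh (Real.sqrt x) * (1 / (2 * Real.sqrt x)) * (2 * Real.sqrt x)⁻¹
          + Real.sinh (Real.sqrt x) * (-(2 * (1 / (2 * Real.sqrt x))) / (2 * Real.sqrt x) ^ 2)) x := by
      have hs : HasDerivAt (fun t : ℝ => Real.sinh (Real.sqrt t))
          (Real.cosh (Real.sqrt x) * (1 / (2 * Real.sqrt x))) x :=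
        (Real.hasDerivAt_sinh (Real.sqrt x)).comp x (Real.hasDerivAt_sqrt hx')
      have hinv : HasDerivAt (fun t : ℝ => (2 * Real.sqrt t)⁻¹)
          (-(2 * (1 / (2 * Real.sqrt x))) / (2 * Real.sqrt x) ^ 2) x := by
        have h2 : HasDerivAt (fun t : ℝ => 2 * Real.sqrt t) (2 * (1 / (2 * Real.sqrt x))) x :=
          (Real.hasDerivAt_sqrt hx').const_mul 2
        exact h2.inv h2sq
      exact hs.mul hinv
    have heq : deriv (deriv f) x = deriv g x := by
      apply Filter.EventuallyEq.deriv_eq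
      filter_upwards [Ioi_mem_nhds hx] using hderiv
    have : (deriv^[2] f) x = deriv (deriv f) x := by
      simp [Function.iterate_succ, Function.comp]
    rw [this, heq, hgd.deriv]
    set r := Real.sqrt x with hr
    have hval : Real.cosh r * (1 / (2 * r)) * (2 * r)⁻¹
        + Real.sinh r * (-(2 * (1 / (2 * r))) / (2 * r) ^ 2)
        = (r * Real.cosh r - Real.sinh r) / (4 * r ^ 3) := by
      field_simp
      ring
    rw [hval]
    exact div_pos (by linarith [sinh_lt_mul_cosh hsq]) (by positivity)

/-- Chord inequality for `cosh` as a function of the squared argument. -/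
lemma cosh_chord {d a s : ℝ} (hd : 0 ≤ d) (hda : d < a) (has : a < s) :
    (s ^ 2 - d ^ 2) * Real.cosh a
      < (s ^ 2 - a ^ 2) * Real.cosh d + (a ^ 2 - d ^ 2) * Real.cosh s := by
  have ha : 0 < a := lt_of_le_of_lt hd hda
  have hs : 0 < s := lt_trans ha has
  have hden : (0:ℝ) < s ^ 2 - d ^ 2 := by nlinarith
  have hw1 : (0:ℝ) < (s ^ 2 - a ^ 2) / (s ^ 2 - d ^ 2) := by
    apply div_pos (by nlinarith) hden
  have hw2 : (0:ℝ) < (a ^ 2 - d ^ 2) / (s ^ 2 - d ^ 2) := by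
    apply div_pos (by nlinarith) hden
  have hsum : (s ^ 2 - a ^ 2) / (s ^ 2 - d ^ 2) + (a ^ 2 - d ^ 2) / (s ^ 2 - d ^ 2) = 1 := by
    field_simp
    ring
  have hcomb : (s ^ 2 - a ^ 2) / (s ^ 2 - d ^ 2) * d ^ 2
      + (a ^ 2 - d ^ 2) / (s ^ 2 - d ^ 2) * s ^ 2 = a ^ 2 := by
    field_simp
    ring
  have hkey := strictConvexOn_cosh_sqrt.2 (Set.mem_Ici.2 (sq_nonneg d))
    (Set.mem_Ici.2 (sq_nonneg s)) (by nlinarith : (d:ℝ)^2 ≠ s^2) hw1 hw2 hsum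
  dsimp only at hkey
  rw [smul_eq_mul, smul_eq_mul, smul_eq_mul, smul_eq_mul, hcomb] at hkey
  rw [Real.sqrt_sq hd, Real.sqrt_sq ha.le, Real.sqrt_sq hs.le] at hkey
  rw [div_mul_eq_mul_div, div_mul_eq_mul_div, ← add_div, lt_div_iff₀ hden] at hkey
  linarith

/-- The key comparison: the cosine of the hyperbolic angle exceeds the cosine of the
Euclidean angle with the same opposite sides, and bounds. -/
lemma key_ineq_s10 {a b c : ℝ} (ha : 0 < a) (hb : 0 < b) (hc : 0 < c)
    (h1 : a < b + c) (h2 : b < a + c) (h3 : c < a + b) :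
    (b ^ 2 + c ^ 2 - a ^ 2) / (2 * b * c)
        < (Real.cosh b * Real.cosh c - Real.cosh a) / (Real.sinh b * Real.sinh c) ∧
    (Real.cosh b * Real.cosh c - Real.cosh a) / (Real.sinh b * Real.sinh c) < 1 ∧
    -1 < (b ^ 2 + c ^ 2 - a ^ 2) / (2 * b * c) := by
  have hY : 0 < Real.sinh b * Real.sinh c :=
    mul_pos (Real.sinh_pos_iff.2 hb) (Real.sinh_pos_iff.2 hc)
  have hbc : (0:ℝ) < 2 * b * c := by positivity
  have hda : |b - c| < a := abs_lt.2 ⟨by linarith, by linarith⟩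
  have hchord := cosh_chord (abs_nonneg (b - c)) hda h1
  rw [sq_abs, Real.cosh_abs, Real.cosh_sub, Real.cosh_add] at hchord
  refine ⟨?_, ?_, ?_⟩
  · rw [div_lt_div_iff₀ hbc hY]
    nlinarith [hchord]
  · rw [div_lt_one hY]
    have : Real.cosh (b - c) < Real.cosh a := by
      rw [Real.cosh_lt_cosh]
      rw [abs_of_pos ha]
      exact hda
    rw [Real.cosh_sub] at this
    linarith
  · rw [lt_div_iff₀ hbc]
    nlinarith

/-- If `θ ∈ [0, π]` has the Euclidean law-of-cosines cosine for sides `a, b, c`, then the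
hyperbolic angle computed from the hyperbolic law of cosines is strictly smaller. -/
lemma hyp_angle_lt {a b c θ : ℝ} (ha : 0 < a) (hb : 0 < b) (hc : 0 < c)
    (h1 : a < b + c) (h2 : b < a + c) (h3 : c < a + b)
    (hθ0 : 0 ≤ θ) (hθπ : θ ≤ Real.pi)
    (hcos : Real.cos θ = (b ^ 2 + c ^ 2 - a ^ 2) / (2 * b * c)) :
    Real.arccos ((Real.cosh b * Real.cosh c - Real.cosh a) /
      (Real.sinh b * Real.sinh c)) < θ := by
  obtain ⟨k1, k2, k3⟩ := key_ineq_s10 ha hb hc h1 h2 h3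
  have hθ : θ = Real.arccos ((b ^ 2 + c ^ 2 - a ^ 2) / (2 * b * c)) := by
    rw [← hcos, Real.arccos_cos hθ0 hθπ]
  rw [hθ]
  exact Real.strictAntiOn_arccos ⟨k3.le, (k1.trans k2).le⟩ ⟨by linarith, k2.le⟩ k1

/-- **Corollary 7 with curvatures `κ = 0`, `κ' = −1`** (via Toponogov's Comparison
Theorem): redrawing a planar triangle with the same side lengths in the hyperbolic plane
strictly decreases every angle.  Here `T = △pqs` is a Euclidean planar triangle with
side lengths `A = |qs|`, `B = |ps|`, `C = |pq|` satisfying the strict triangle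
inequality, and `T' = △zwu` is a geodesic triangle in the upper half-plane with the same
side lengths; corresponding angles are opposite sides of the same length. -/
theorem hyperbolic_angles_lt_planar_angles (A B C : ℝ)
    (hA : 0 < A) (hB : 0 < B) (hC : 0 < C)
    (hABC : A < B + C) (hBCA : B < A + C) (hCAB : C < A + B)
    (p q s : E2) (hA₁ : dist q s = A) (hB₁ : dist p s = B) (hC₁ : dist p q = C)
    (z w u : UpperHalfPlane) (htri : HypTriangle z w u)
    (hA₂ : dist w u = A) (hB₂ : dist z u = B) (hC₂ : dist z w = C) :
    hypAngle z w u < EuclideanGeometry.angle q p s ∧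
    hypAngle w z u < EuclideanGeometry.angle p q s ∧
    hypAngle u z w < EuclideanGeometry.angle p s q := by
  refine ⟨?_, ?_, ?_⟩
  · have h := EuclideanGeometry.law_cos q p s
    rw [dist_comm q p, dist_comm s p, hC₁, hB₁, hA₁] at h
    have hcos : Real.cos (EuclideanGeometry.angle q p s)
        = (C ^ 2 + B ^ 2 - A ^ 2) / (2 * C * B) := by
      field_simp
      linarith [h]
    have hstep := hyp_angle_lt hA hC hB (by linarith) (by linarith) (by linarith)
      (EuclideanGeometry.angle_nonneg q p s) (EuclideanGeometry.angle_le_pi q p s) hcos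
    simp only [hypAngle, hA₂, hB₂, hC₂]
    exact hstep
  · have h := EuclideanGeometry.law_cos p q s
    rw [dist_comm s q, hC₁, hA₁, hB₁] at h
    have hcos : Real.cos (EuclideanGeometry.angle p q s)
        = (C ^ 2 + A ^ 2 - B ^ 2) / (2 * C * A) := by
      field_simp
      linarith [h]
    have hstep := hyp_angle_lt hB hC hA (by linarith) (by linarith) (by linarith)
      (EuclideanGeometry.angle_nonneg p q s) (EuclideanGeometry.angle_le_pi p q s) hcos
    simp only [hypAngle]
    rw [dist_comm w z, hC₂, hA₂, hB₂]
    exact hstep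
  · have h := EuclideanGeometry.law_cos p s q
    rw [hC₁, hB₁, hA₁] at h
    have hcos : Real.cos (EuclideanGeometry.angle p s q)
        = (B ^ 2 + A ^ 2 - C ^ 2) / (2 * B * A) := by
      field_simp
      linarith [h]
    have hstep := hyp_angle_lt hC hB hA (by linarith) (by linarith) (by linarith)
      (EuclideanGeometry.angle_nonneg p s q) (EuclideanGeometry.angle_le_pi p s q) hcos
    simp only [hypAngle]
    rw [dist_comm u z, dist_comm u w, hB₂, hA₂, hC₂]
    exact hstep
end
end
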